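/- arXiv:2211.14706 — 8 statements merged into one kernel-verified Lean document; each statement's English description precedes it below -/
import Mathlib

section
/- Let w ∈ {0, ±1}^n and let A = [I_n, −I_n, w, −w] ∈ ℝ^{n×(2n+2)}. Let Â be the block matrix with k diagonal blocks each equal to A and a final block column of identities: Â = [[A,0,…,0,I_n],[0,A,…,0,I_n],…,[0,0,…,A,I_n]]. Then Â is totally unimodular (every square submatrix has determinant in {0, ±1}). -/
private lemma tri_mul {a b : ℝ} (ha : a = 0 ∨ a = 1 ∨ a = -1) (hb : b = 0 ∨ b = 1 ∨ b = -1) :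
    a * b = 0 ∨ a * b = 1 ∨ a * b = -1 := by
  rcases ha with h | h | h <;> rcases hb with h' | h' | h' <;> simp [h, h']

private lemma tri_negpow (e : ℕ) : ((-1:ℝ)^e) = 0 ∨ ((-1:ℝ)^e) = 1 ∨ ((-1:ℝ)^e) = -1 := by
  rcases Nat.even_or_odd e with h | h
  · right; left; exact h.neg_one_pow
  · right; right; exact h.neg_one_pow

private lemma fin2_cases {s s' : Fin 2} (h : s ≠ s') :
    (s = 0 ∧ s' = 1) ∨ (s = 1 ∧ s' = 0) := by
  fin_cases s <;> fin_cases s' <;> simp_all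

/-- total unimodularity of the block matrix Â. -/
theorem stmt0 (n k : ℕ) (w : Fin n → ℝ) (hw : ∀ j, w j = 0 ∨ w j = 1 ∨ w j = -1)
    (A : Matrix (Fin n) (Fin n ⊕ Fin n ⊕ Fin 2) ℝ)
    (hA : ∀ i j, A i j = Sum.elim (fun j' => if i = j' then (1:ℝ) else 0)
      (Sum.elim (fun j' => if i = j' then (-1:ℝ) else 0)
        (fun t => if t = 0 then w i else -w i)) j)
    (Ahat : Matrix (Fin k × Fin n) ((Fin k × (Fin n ⊕ Fin n ⊕ Fin 2)) ⊕ Fin n) ℝ)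
    (hAhat : ∀ p i q c, Ahat (p, i) (Sum.inl (q, c)) = if p = q then A i c else 0)
    (hAhat' : ∀ p i j, Ahat (p, i) (Sum.inr j) = if i = j then (1:ℝ) else 0) :
    ∀ (m : ℕ) (r : Fin m → Fin k × Fin n)
      (c : Fin m → (Fin k × (Fin n ⊕ Fin n ⊕ Fin 2)) ⊕ Fin n),
      (Ahat.submatrix r c).det = 0 ∨ (Ahat.submatrix r c).det = 1 ∨
        (Ahat.submatrix r c).det = -1 := by
  -- entry descriptions
  have hE1 : ∀ p i q j, Ahat (p, i) (Sum.inl (q, Sum.inl j)) =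
      if p = q ∧ i = j then 1 else 0 := by
    intro p i q j
    rw [hAhat, hA]
    by_cases h : p = q <;> by_cases h' : i = j <;> simp [h, h']
  have hE2 : ∀ p i q j, Ahat (p, i) (Sum.inl (q, Sum.inr (Sum.inl j))) =
      if p = q ∧ i = j then -1 else 0 := by
    intro p i q j
    rw [hAhat, hA]
    by_cases h : p = q <;> by_cases h' : i = j <;> simp [h, h']
  have hE3 : ∀ p i q s, Ahat (p, i) (Sum.inl (q, Sum.inr (Sum.inr s))) =
      if p = q then (if s = 0 then w i else -w i) else 0 := by
    intro p i q s
    rw [hAhat, hA]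
    rfl
  -- all entries are 0, 1, or -1
  have hEntry : ∀ (u : Fin k × Fin n) col,
      Ahat u col = 0 ∨ Ahat u col = 1 ∨ Ahat u col = -1 := by
    rintro ⟨p, i⟩ (⟨q, (j | j | s)⟩ | j)
    · rw [hE1]; split_ifs <;> simp
    · rw [hE2]; split_ifs <;> simp
    · rw [hE3]
      rcases hw i with h | h | h <;> split_ifs <;> simp [h]
    · rw [hAhat']; split_ifs <;> simp
  intro m
  induction m using Nat.strong_induction_on with
  | _ m ih =>
  intro r c
  cases m with
  | zero => right; left; exact Matrix.det_fin_zero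
  | succ m =>
  set M : Matrix (Fin (m+1)) (Fin (m+1)) ℝ := Ahat.submatrix r c with hM
  have hMapp : ∀ t x, M t x = Ahat (r t) (c x) := fun t x => rfl
  -- Case A: a column with at most one nonzero entry
  by_cases hcol1 : ∃ x t₀, ∀ t, t ≠ t₀ → M t x = 0
  · obtain ⟨x, t₀, h⟩ := hcol1
    rw [Matrix.det_succ_column M x,
      Fintype.sum_eq_single t₀ (fun t ht => by rw [h t ht, mul_zero, zero_mul])]
    have hsub : M.submatrix t₀.succAbove x.succAbove
        = Ahat.submatrix (r ∘ t₀.succAbove) (c ∘ x.succAbove) := by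
      rw [hM, Matrix.submatrix_submatrix]
    exact tri_mul (tri_mul (tri_negpow _) (hEntry (r t₀) (c x)))
      (by rw [hsub]; exact ih m (Nat.lt_succ_self m) _ _)
  -- otherwise every column has at least two nonzero entries
  push_neg at hcol1
  have h2 : ∀ x, ∃ t₁ t₂, t₁ ≠ t₂ ∧ M t₁ x ≠ 0 ∧ M t₂ x ≠ 0 := by
    intro x
    obtain ⟨t₁, _, h₁⟩ := hcol1 x 0
    obtain ⟨t₂, ht₂, h₂⟩ := hcol1 x t₁
    exact ⟨t₂, t₁, ht₂, h₂, h₁⟩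
  -- Case B: some unit-type column present: duplicate rows
  by_cases hunit : ∃ x q j, c x = Sum.inl (q, Sum.inl j) ∨ c x = Sum.inl (q, Sum.inr (Sum.inl j))
  · left
    obtain ⟨x, q, j, hx⟩ := hunit
    have key : ∀ t, M t x ≠ 0 → r t = (q, j) := by
      intro t ht
      rw [hMapp] at ht
      rcases hrt : r t with ⟨p, i⟩
      rw [hrt] at ht
      rcases hx with hx | hx <;> rw [hx] at ht
      · rw [hE1] at ht
        split_ifs at ht with h
        · rw [h.1, h.2]
        · exact absurd rfl ht
      · rw [hE2] at ht
        split_ifs at ht with h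
        · rw [h.1, h.2]
        · exact absurd rfl ht
    obtain ⟨t₁, t₂, hne, h₁, h₂⟩ := h2 x
    refine Matrix.det_zero_of_row_eq hne (funext fun y => ?_)
    rw [hMapp, hMapp, key t₁ h₁, key t₂ h₂]
  push_neg at hunit
  -- column classification
  have hctype : ∀ x, (∃ q s, c x = Sum.inl (q, Sum.inr (Sum.inr s))) ∨ (∃ j, c x = Sum.inr j) := by
    intro x
    rcases hcx : c x with ⟨q, (j | j | s)⟩ | j
    · exact absurd hcx (hunit x q j).1
    · exact absurd hcx (hunit x q j).2
    · exact Or.inl ⟨q, s, rfl⟩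
    · exact Or.inr ⟨j, rfl⟩
  -- Case C: duplicate columns
  by_cases hcdup : ∃ x y, x ≠ y ∧ c x = c y
  · left
    obtain ⟨x, y, hne, hc⟩ := hcdup
    exact Matrix.det_zero_of_column_eq hne (fun t => by rw [hMapp, hMapp, hc])
  push_neg at hcdup
  have hcinj : Function.Injective c := by
    intro x y h
    by_contra hne
    exact hcdup x y hne h
  -- Case D: two w-type columns in the same block: negated columns
  by_cases hpair : ∃ x y q s s', x ≠ y ∧ c x = Sum.inl (q, Sum.inr (Sum.inr s)) ∧
      c y = Sum.inl (q, Sum.inr (Sum.inr s'))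
  · left
    obtain ⟨x, y, q, s, s', hne, hx, hy⟩ := hpair
    have hss : s ≠ s' := by
      rintro rfl
      exact hne (hcinj (hx.trans hy.symm))
    rw [← Matrix.exists_mulVec_eq_zero_iff]
    refine ⟨fun z => if z = x then 1 else if z = y then 1 else 0, ?_, ?_⟩
    · intro h0
      have := congrFun h0 x
      simp at this
    · funext t
      have hsum : M.mulVec (fun z => if z = x then 1 else if z = y then 1 else 0) t
          = M t x * 1 + M t y * 1 := by
        rw [Matrix.mulVec, dotProduct,
          Finset.sum_eq_add_of_mem x y (Finset.mem_univ _) (Finset.mem_univ _) hne]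
        · simp
        · intro z _ hz
          simp [hz.1, hz.2]
      rw [hsum]
      rcases hrt : r t with ⟨p, i⟩
      rw [hMapp, hMapp, hrt, hx, hy, hE3, hE3]
      simp only [Pi.zero_apply]
      rcases fin2_cases hss with ⟨rfl, rfl⟩ | ⟨rfl, rfl⟩ <;>
        by_cases hpq : p = q <;> simp [hpq]
  push_neg at hpair
  -- row classification
  have hclass : ∀ t x, M t x ≠ 0 →
      (∃ s, c x = Sum.inl ((r t).1, Sum.inr (Sum.inr s)) ∧
        M t x = (if s = 0 then w (r t).2 else - w (r t).2)) ∨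
      (c x = Sum.inr (r t).2 ∧ M t x = 1) := by
    intro t x ht
    rcases hctype x with ⟨q, s, hx⟩ | ⟨j, hx⟩
    · left
      rcases hrt : r t with ⟨p, i⟩
      have hv : M t x = if p = q then (if s = 0 then w i else -w i) else 0 := by
        rw [hMapp, hrt, hx, hE3]
      have hpq : p = q := by
        by_contra hpq
        rw [hv, if_neg hpq] at ht
        exact ht rfl
      exact ⟨s, by rw [hx, hpq], by rw [hv, if_pos hpq]⟩
    · right
      rcases hrt : r t with ⟨p, i⟩
      have hv : M t x = if i = j then (1:ℝ) else 0 := by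
        rw [hMapp, hrt, hx, hAhat']
      have hij : i = j := by
        by_contra hij
        rw [hv, if_neg hij] at ht
        exact ht rfl
      exact ⟨by rw [hx, hij], by rw [hv, if_pos hij]⟩
  -- Case E: a row with at most one nonzero entry
  by_cases hrow1 : ∃ t x₀, ∀ x, x ≠ x₀ → M t x = 0
  · obtain ⟨t, x₀, h⟩ := hrow1
    rw [Matrix.det_succ_row M t,
      Fintype.sum_eq_single x₀ (fun x hx => by rw [h x hx, mul_zero, zero_mul])]
    have hsub : M.submatrix t.succAbove x₀.succAbove
        = Ahat.submatrix (r ∘ t.succAbove) (c ∘ x₀.succAbove) := by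
      rw [hM, Matrix.submatrix_submatrix]
    exact tri_mul (tri_mul (tri_negpow _) (hEntry (r t) (c x₀)))
      (by rw [hsub]; exact ih m (Nat.lt_succ_self m) _ _)
  push_neg at hrow1
  have hr2 : ∀ t, ∃ x y, x ≠ y ∧ M t x ≠ 0 ∧ M t y ≠ 0 := by
    intro t
    obtain ⟨x, _, h₁⟩ := hrow1 t 0
    obtain ⟨y, hy, h₂⟩ := hrow1 t x
    exact ⟨y, x, hy, h₂, h₁⟩
  -- now every row has exactly a w-type and a final-type nonzero entry
  have hrowstruct : ∀ t, ∃ xw xf s, c xw = Sum.inl ((r t).1, Sum.inr (Sum.inr s)) ∧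
      M t xw = (if s = 0 then w (r t).2 else - w (r t).2) ∧
      c xf = Sum.inr (r t).2 ∧ M t xf = 1 := by
    intro t
    obtain ⟨x, y, hne, h₁, h₂⟩ := hr2 t
    rcases hclass t x h₁ with ⟨s, hx, hvx⟩ | ⟨hx, hvx⟩ <;>
      rcases hclass t y h₂ with ⟨s', hy, hvy⟩ | ⟨hy, hvy⟩
    · exact absurd hy (hpair x y (r t).1 s s' hne hx)
    · exact ⟨x, y, s, hx, hvx, hy, hvy⟩
    · exact ⟨y, x, s', hy, hvy, hx, hvx⟩
    · exact absurd (hcinj (hx.trans hy.symm)) hne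
  left
  rw [← Matrix.exists_mulVec_eq_zero_iff]
  set v : Fin (m+1) → ℝ := fun z => Sum.elim
      (fun qc => Sum.elim (fun _ => (0:ℝ))
        (Sum.elim (fun _ => (0:ℝ)) (fun s => if s = 0 then 1 else -1)) qc.2)
      (fun j => -w j) (c z) with hvdef
  have hv : ∀ z, v z = Sum.elim
      (fun qc => Sum.elim (fun _ => (0:ℝ))
        (Sum.elim (fun _ => (0:ℝ)) (fun s => if s = 0 then 1 else -1)) qc.2)
      (fun j => -w j) (c z) := fun z => rfl
  refine ⟨v, ?_, ?_⟩
  · obtain ⟨xw, _, s, hxw, _, _, _⟩ := hrowstruct 0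
    intro h0
    have h1 := congrFun h0 xw
    rw [hv, hxw] at h1
    simp only [Sum.elim_inl, Sum.elim_inr, Pi.zero_apply] at h1
    split_ifs at h1 <;> simp_all
  · funext t
    obtain ⟨xw, xf, s, hxw, hvxw, hxf, hvxf⟩ := hrowstruct t
    have hne : xw ≠ xf := by
      intro h
      rw [h, hxf] at hxw
      exact absurd hxw (by simp)
    have hzero : ∀ z, z ≠ xw → z ≠ xf → M t z = 0 := by
      intro z hzw hzf
      by_contra hz
      rcases hclass t z hz with ⟨s', hzc, _⟩ | ⟨hzc, _⟩
      · rcases eq_or_ne s' s with rfl | hss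
        · exact hzw (hcinj (hzc.trans hxw.symm))
        · exact hpair z xw (r t).1 s' s hzw hzc hxw
      · exact hzf (hcinj (hzc.trans hxf.symm))
    have hsum : M.mulVec v t = M t xw * v xw + M t xf * v xf := by
      simp only [Matrix.mulVec, dotProduct]
      rw [Finset.sum_eq_add_of_mem xw xf (Finset.mem_univ _) (Finset.mem_univ _) hne]
      intro z _ hz
      rw [hzero z hz.1 hz.2, zero_mul]
    rw [hsum, hvxw, hvxf, hv, hv, hxw, hxf]
    simp only [Sum.elim_inl, Sum.elim_inr, Pi.zero_apply]
    split_ifs <;> ring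
end

section
/- Let w ∈ {0, ±1}^n. Consider the polyhedron P ⊆ ℝ^{k(2n+2)+2n} of points (β¹,γ¹,θ¹,…,β^k,γ^k,θ^k,α₊,α₋) satisfying β^i − γ^i + w θ^i_1 − w θ^i_2 + α₊ − α₋ = 0 for every i ∈ {1,…,k}, together with the bound constraints 0 ≤ β^i, γ^i ≤ 1 (componentwise), 0 ≤ θ^i_1, θ^i_2 ≤ 1, and 0 ≤ α₊, α₋ ≤ 1 (componentwise). Then every extreme point of P has all coordinates in {0,1}. -/
private def isZ (x : ℝ) : Prop := ∃ m : ℤ, x = (m : ℝ)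

private lemma isZ_of01 {x : ℝ} (h : x = 0 ∨ x = 1) : isZ x := by
  rcases h with h | h
  · exact ⟨0, by simp [h]⟩
  · exact ⟨1, by simp [h]⟩

private lemma isZ_sub {x y : ℝ} (hx : isZ x) (hy : isZ y) : isZ (x - y) := by
  obtain ⟨a, ha⟩ := hx; obtain ⟨b, hb⟩ := hy; exact ⟨a - b, by push_cast [ha, hb]; ring⟩

private lemma isZ_neg {x : ℝ} (hx : isZ x) : isZ (-x) := by
  obtain ⟨a, ha⟩ := hx; exact ⟨-a, by push_cast [ha]; ring⟩

private lemma isZ_add {x y : ℝ} (hx : isZ x) (hy : isZ y) : isZ (x + y) := by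
  obtain ⟨a, ha⟩ := hx; obtain ⟨b, hb⟩ := hy; exact ⟨a + b, by push_cast [ha, hb]; ring⟩

private lemma isZ_w {u x : ℝ} (hu : u = 0 ∨ u = 1 ∨ u = -1) (hx : isZ x) : isZ (u * x) := by
  obtain ⟨a, ha⟩ := hx
  rcases hu with h | h | h
  · exact ⟨0, by simp [h]⟩
  · exact ⟨a, by simp [h, ha]⟩
  · exact ⟨-a, by push_cast [h, ha]; ring⟩

private lemma pair01 {x y : ℝ} (hx0 : 0 ≤ x) (hx1 : x ≤ 1) (hy0 : 0 ≤ y) (hy1 : y ≤ 1)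
    (hnb : ¬(¬(x = 0 ∨ x = 1) ∧ ¬(y = 0 ∨ y = 1))) (hz : isZ (x - y)) :
    (x = 0 ∨ x = 1) ∧ (y = 0 ∨ y = 1) := by
  obtain ⟨m, hm⟩ := hz
  have hm1 : (-1 : ℝ) ≤ (m : ℝ) := by linarith
  have hm2 : (m : ℝ) ≤ 1 := by linarith
  have hm1' : (-1 : ℤ) ≤ m := by exact_mod_cast hm1
  have hm2' : m ≤ (1 : ℤ) := by exact_mod_cast hm2
  interval_cases m
  · push_cast at hm
    exact ⟨Or.inl (by linarith), Or.inr (by linarith)⟩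
  · push_cast at hm
    rw [not_and_or, not_not, not_not] at hnb
    have hxy : x = y := by linarith
    rcases hnb with h | h
    · exact ⟨h, by rw [← hxy]; exact h⟩
    · exact ⟨by rw [hxy]; exact h, h⟩
  · push_cast at hm
    exact ⟨Or.inr (by linarith), Or.inl (by linarith)⟩

private lemma pertOK {x d e : ℝ} (hx0 : 0 ≤ x) (hx1 : x ≤ 1)
    (h : d = 0 ∨ (0 < x ∧ x < 1 ∧ |d| ≤ e ∧ e ≤ min x (1 - x))) :
    (0 ≤ x + d ∧ x + d ≤ 1) ∧ (0 ≤ x - d ∧ x - d ≤ 1) := by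
  rcases h with h | ⟨h1, h2, h3, h4⟩
  · subst h; constructor <;> constructor <;> linarith
  · obtain ⟨ha, hb⟩ := abs_le.mp h3
    have h5 := min_le_left x (1 - x); have h6 := min_le_right x (1 - x)
    constructor <;> constructor <;> linarith

private lemma ifsplit (c : Prop) [Decidable c] (x : ℝ) :
    (if c then x else 0) - (if c then 0 else -x) = x := by
  split <;> ring

/-- every extreme point of the polyhedron P (with bound constraints)
has all coordinates in {0,1}. Points are tuples (β, γ, θ₁, θ₂, α₊, α₋). -/
theorem stmt1 (n k : ℕ) (w : Fin n → ℝ) (hw : ∀ j, w j = 0 ∨ w j = 1 ∨ w j = -1)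
    (P : Set ((Fin k → Fin n → ℝ) × (Fin k → Fin n → ℝ) × (Fin k → ℝ) × (Fin k → ℝ) ×
      (Fin n → ℝ) × (Fin n → ℝ)))
    (hP : ∀ p, p ∈ P ↔
      (∀ i j, p.1 i j - p.2.1 i j + w j * p.2.2.1 i - w j * p.2.2.2.1 i
          + p.2.2.2.2.1 j - p.2.2.2.2.2 j = 0) ∧
      (∀ i j, 0 ≤ p.1 i j ∧ p.1 i j ≤ 1) ∧ (∀ i j, 0 ≤ p.2.1 i j ∧ p.2.1 i j ≤ 1) ∧
      (∀ i, 0 ≤ p.2.2.1 i ∧ p.2.2.1 i ≤ 1) ∧ (∀ i, 0 ≤ p.2.2.2.1 i ∧ p.2.2.2.1 i ≤ 1) ∧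
      (∀ j, 0 ≤ p.2.2.2.2.1 j ∧ p.2.2.2.2.1 j ≤ 1) ∧
      (∀ j, 0 ≤ p.2.2.2.2.2 j ∧ p.2.2.2.2.2 j ≤ 1))
    (p : (Fin k → Fin n → ℝ) × (Fin k → Fin n → ℝ) × (Fin k → ℝ) × (Fin k → ℝ) ×
      (Fin n → ℝ) × (Fin n → ℝ))
    (hp : p ∈ Set.extremePoints ℝ P) :
    (∀ i j, p.1 i j = 0 ∨ p.1 i j = 1) ∧ (∀ i j, p.2.1 i j = 0 ∨ p.2.1 i j = 1) ∧
    (∀ i, p.2.2.1 i = 0 ∨ p.2.2.1 i = 1) ∧ (∀ i, p.2.2.2.1 i = 0 ∨ p.2.2.2.1 i = 1) ∧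
    (∀ j, p.2.2.2.2.1 j = 0 ∨ p.2.2.2.2.1 j = 1) ∧
    (∀ j, p.2.2.2.2.2 j = 0 ∨ p.2.2.2.2.2 j = 1) := by
  classical
  obtain ⟨hpP, hext⟩ := hp
  obtain ⟨heq, bB, bC, bT1, bT2, bA1, bA2⟩ := (hP p).mp hpP
  -- extremality in usable form
  have key : ∀ d : ((Fin k → Fin n → ℝ) × (Fin k → Fin n → ℝ) × (Fin k → ℝ) × (Fin k → ℝ) ×
      (Fin n → ℝ) × (Fin n → ℝ)), p + d ∈ P → p - d ∈ P → d = 0 := by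
    intro d h1 h2
    have h3 : p ∈ openSegment ℝ (p - d) (p + d) :=
      ⟨1/2, 1/2, by norm_num, by norm_num, by norm_num, by module⟩
    exact sub_eq_self.mp (hext h2 h1 h3)
  -- the margin function and the global epsilon
  set g : ℝ → ℝ := fun x => if 0 < x ∧ x < 1 then min x (1 - x) else 1 with hgdef
  have hgpos : ∀ x, 0 < g x := by
    intro x
    simp only [hgdef]
    split
    · next h => exact lt_min h.1 (by linarith [h.2])
    · norm_num
  have hgeq : ∀ x : ℝ, 0 < x ∧ x < 1 → g x = min x (1 - x) := by
    intro x h; simp only [hgdef, if_pos h]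
  set c : (Fin k × Fin n) ⊕ (Fin k × Fin n) ⊕ Fin k ⊕ Fin k ⊕ Fin n ⊕ Fin n ⊕ Unit → ℝ :=
    Sum.elim (fun q => p.1 q.1 q.2) (Sum.elim (fun q => p.2.1 q.1 q.2) (Sum.elim p.2.2.1
      (Sum.elim p.2.2.2.1 (Sum.elim p.2.2.2.2.1 (Sum.elim p.2.2.2.2.2 (fun _ => 1/2))))))
    with hcdef
  set ε : ℝ := Finset.univ.inf' Finset.univ_nonempty (fun z => g (c z)) with hedef
  have hεpos : 0 < ε := by
    rw [hedef, Finset.lt_inf'_iff]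
    intro z _; exact hgpos _
  have hεle : ∀ z, ε ≤ g (c z) := fun z => Finset.inf'_le _ (Finset.mem_univ z)
  have gB : ∀ i j, ε ≤ g (p.1 i j) := fun i j => hεle (Sum.inl (i, j))
  have gC : ∀ i j, ε ≤ g (p.2.1 i j) := fun i j => hεle (Sum.inr (Sum.inl (i, j)))
  have gT1 : ∀ i, ε ≤ g (p.2.2.1 i) := fun i => hεle (Sum.inr (Sum.inr (Sum.inl i)))
  have gT2 : ∀ i, ε ≤ g (p.2.2.2.1 i) := fun i => hεle (Sum.inr (Sum.inr (Sum.inr (Sum.inl i))))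
  have gA1 : ∀ j, ε ≤ g (p.2.2.2.2.1 j) := fun j =>
    hεle (Sum.inr (Sum.inr (Sum.inr (Sum.inr (Sum.inl j)))))
  have gA2 : ∀ j, ε ≤ g (p.2.2.2.2.2 j) := fun j =>
    hεle (Sum.inr (Sum.inr (Sum.inr (Sum.inr (Sum.inr (Sum.inl j))))))
  have frlt : ∀ x : ℝ, 0 ≤ x → x ≤ 1 → ¬(x = 0 ∨ x = 1) → 0 < x ∧ x < 1 := by
    intro x h0 h1 h
    push_neg at h
    exact ⟨h0.lt_of_ne (Ne.symm h.1), h1.lt_of_ne h.2⟩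
  -- a feasible two-sided perturbation direction must be zero
  have zero_dir : ∀ d : ((Fin k → Fin n → ℝ) × (Fin k → Fin n → ℝ) × (Fin k → ℝ) × (Fin k → ℝ) ×
      (Fin n → ℝ) × (Fin n → ℝ)),
      (∀ i j, d.1 i j - d.2.1 i j + w j * d.2.2.1 i - w j * d.2.2.2.1 i
          + d.2.2.2.2.1 j - d.2.2.2.2.2 j = 0) →
      (∀ i j, d.1 i j = 0 ∨ (0 < p.1 i j ∧ p.1 i j < 1 ∧ |d.1 i j| ≤ ε)) →
      (∀ i j, d.2.1 i j = 0 ∨ (0 < p.2.1 i j ∧ p.2.1 i j < 1 ∧ |d.2.1 i j| ≤ ε)) →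
      (∀ i, d.2.2.1 i = 0 ∨ (0 < p.2.2.1 i ∧ p.2.2.1 i < 1 ∧ |d.2.2.1 i| ≤ ε)) →
      (∀ i, d.2.2.2.1 i = 0 ∨ (0 < p.2.2.2.1 i ∧ p.2.2.2.1 i < 1 ∧ |d.2.2.2.1 i| ≤ ε)) →
      (∀ j, d.2.2.2.2.1 j = 0 ∨ (0 < p.2.2.2.2.1 j ∧ p.2.2.2.2.1 j < 1 ∧ |d.2.2.2.2.1 j| ≤ ε)) →
      (∀ j, d.2.2.2.2.2 j = 0 ∨ (0 < p.2.2.2.2.2 j ∧ p.2.2.2.2.2 j < 1 ∧ |d.2.2.2.2.2 j| ≤ ε)) →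
      d = 0 := by
    intro d hdeq s1 s2 s3 s4 s5 s6
    have mk : ∀ (x dd : ℝ), 0 ≤ x → x ≤ 1 → ε ≤ g x →
        (dd = 0 ∨ (0 < x ∧ x < 1 ∧ |dd| ≤ ε)) →
        (0 ≤ x + dd ∧ x + dd ≤ 1) ∧ (0 ≤ x - dd ∧ x - dd ≤ 1) := by
      intro x dd h0 h1 hge h
      refine pertOK (e := ε) h0 h1 ?_
      rcases h with h | ⟨h2, h3, h4⟩
      · exact Or.inl h
      · exact Or.inr ⟨h2, h3, h4, by rwa [hgeq x ⟨h2, h3⟩] at hge⟩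
    have okB := fun i j => mk _ _ (bB i j).1 (bB i j).2 (gB i j) (s1 i j)
    have okC := fun i j => mk _ _ (bC i j).1 (bC i j).2 (gC i j) (s2 i j)
    have okT1 := fun i => mk _ _ (bT1 i).1 (bT1 i).2 (gT1 i) (s3 i)
    have okT2 := fun i => mk _ _ (bT2 i).1 (bT2 i).2 (gT2 i) (s4 i)
    have okA1 := fun j => mk _ _ (bA1 j).1 (bA1 j).2 (gA1 j) (s5 j)
    have okA2 := fun j => mk _ _ (bA2 j).1 (bA2 j).2 (gA2 j) (s6 j)
    apply key
    · rw [hP]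
      simp only [Prod.fst_add, Prod.snd_add, Pi.add_apply]
      refine ⟨fun i j => by have h1 := heq i j; have h2 := hdeq i j; linarith,
        fun i j => (okB i j).1, fun i j => (okC i j).1, fun i => (okT1 i).1,
        fun i => (okT2 i).1, fun j => (okA1 j).1, fun j => (okA2 j).1⟩
    · rw [hP]
      simp only [Prod.fst_sub, Prod.snd_sub, Pi.sub_apply]
      refine ⟨fun i j => by have h1 := heq i j; have h2 := hdeq i j; linarith,
        fun i j => (okB i j).2, fun i j => (okC i j).2, fun i => (okT1 i).2,
        fun i => (okT2 i).2, fun j => (okA1 j).2, fun j => (okA2 j).2⟩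
  -- Claim: β and γ are never both fractional at the same (i,j)
  have NB1 : ∀ i j, ¬(¬(p.1 i j = 0 ∨ p.1 i j = 1) ∧ ¬(p.2.1 i j = 0 ∨ p.2.1 i j = 1)) := by
    intro i₀ j₀ hc
    obtain ⟨hf1, hf2⟩ := hc
    have hd0 := zero_dir ((fun i j => if i = i₀ ∧ j = j₀ then ε else 0),
      (fun i j => if i = i₀ ∧ j = j₀ then ε else 0), 0, 0, 0, 0)
      (by intro i j; by_cases h : i = i₀ ∧ j = j₀ <;> simp [h])
      (by
        intro i j; by_cases h : i = i₀ ∧ j = j₀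
        · refine Or.inr ?_
          simp only [if_pos h]
          obtain ⟨ha, hb⟩ := frlt _ (bB i j).1 (bB i j).2 (by rw [h.1, h.2]; exact hf1)
          exact ⟨ha, hb, by rw [abs_of_pos hεpos]⟩
        · exact Or.inl (by simp [h]))
      (by
        intro i j; by_cases h : i = i₀ ∧ j = j₀
        · refine Or.inr ?_
          simp only [if_pos h]
          obtain ⟨ha, hb⟩ := frlt _ (bC i j).1 (bC i j).2 (by rw [h.1, h.2]; exact hf2)
          exact ⟨ha, hb, by rw [abs_of_pos hεpos]⟩
        · exact Or.inl (by simp [h]))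
      (fun i => Or.inl rfl) (fun i => Or.inl rfl) (fun j => Or.inl rfl) (fun j => Or.inl rfl)
    have he := congrFun (congrFun (congrArg Prod.fst hd0) i₀) j₀
    simp at he
    exact hεpos.ne' he
  -- Claim: θ₁ and θ₂ are never both fractional at the same i
  have NB2 : ∀ i, ¬(¬(p.2.2.1 i = 0 ∨ p.2.2.1 i = 1) ∧ ¬(p.2.2.2.1 i = 0 ∨ p.2.2.2.1 i = 1)) := by
    intro i₀ hc
    obtain ⟨hf1, hf2⟩ := hc
    have hd0 := zero_dir (0, 0, (fun i => if i = i₀ then ε else 0),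
      (fun i => if i = i₀ then ε else 0), 0, 0)
      (by intro i j; by_cases h : i = i₀ <;> simp [h])
      (fun i j => Or.inl rfl) (fun i j => Or.inl rfl)
      (by
        intro i; by_cases h : i = i₀
        · refine Or.inr ?_
          simp only [if_pos h]
          obtain ⟨ha, hb⟩ := frlt _ (bT1 i).1 (bT1 i).2 (by rw [h]; exact hf1)
          exact ⟨ha, hb, by rw [abs_of_pos hεpos]⟩
        · exact Or.inl (by simp [h]))
      (by
        intro i; by_cases h : i = i₀
        · refine Or.inr ?_
          simp only [if_pos h]
          obtain ⟨ha, hb⟩ := frlt _ (bT2 i).1 (bT2 i).2 (by rw [h]; exact hf2)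
          exact ⟨ha, hb, by rw [abs_of_pos hεpos]⟩
        · exact Or.inl (by simp [h]))
      (fun j => Or.inl rfl) (fun j => Or.inl rfl)
    have he := congrFun (congrArg (fun q => q.2.2.1) hd0) i₀
    simp at he
    exact hεpos.ne' he
  -- Claim: α₊ and α₋ are never both fractional at the same j
  have NB3 : ∀ j, ¬(¬(p.2.2.2.2.1 j = 0 ∨ p.2.2.2.2.1 j = 1) ∧
      ¬(p.2.2.2.2.2 j = 0 ∨ p.2.2.2.2.2 j = 1)) := by
    intro j₀ hc
    obtain ⟨hf1, hf2⟩ := hc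
    have hd0 := zero_dir (0, 0, 0, 0, (fun j => if j = j₀ then ε else 0),
      (fun j => if j = j₀ then ε else 0))
      (by intro i j; by_cases h : j = j₀ <;> simp [h])
      (fun i j => Or.inl rfl) (fun i j => Or.inl rfl)
      (fun i => Or.inl rfl) (fun i => Or.inl rfl)
      (by
        intro j; by_cases h : j = j₀
        · refine Or.inr ?_
          simp only [if_pos h]
          obtain ⟨ha, hb⟩ := frlt _ (bA1 j).1 (bA1 j).2 (by rw [h]; exact hf1)
          exact ⟨ha, hb, by rw [abs_of_pos hεpos]⟩
        · exact Or.inl (by simp [h]))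
      (by
        intro j; by_cases h : j = j₀
        · refine Or.inr ?_
          simp only [if_pos h]
          obtain ⟨ha, hb⟩ := frlt _ (bA2 j).1 (bA2 j).2 (by rw [h]; exact hf2)
          exact ⟨ha, hb, by rw [abs_of_pos hεpos]⟩
        · exact Or.inl (by simp [h]))
    have he := congrFun (congrArg (fun q => q.2.2.2.2.1) hd0) j₀
    simp at he
    exact hεpos.ne' he
  -- Claim: every θ-difference is an integer
  have NT : ∀ i, isZ (p.2.2.1 i - p.2.2.2.1 i) := by
    by_contra hc
    simp only [not_forall] at hc
    obtain ⟨i₀, hi₀⟩ := hc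
    set dT : Fin k → ℝ := fun i => if isZ (p.2.2.1 i - p.2.2.2.1 i) then 0 else ε with hdT
    set dA : Fin n → ℝ := fun j =>
      if (¬ isZ (p.2.2.2.2.1 j - p.2.2.2.2.2 j)) ∧
         (∃ i, ¬ isZ (p.2.2.1 i - p.2.2.2.1 i) ∧ isZ (p.1 i j - p.2.1 i j))
      then -(w j) * ε else 0 with hdA
    set dB : Fin k → Fin n → ℝ := fun i j => -(w j) * dT i - dA j with hdB
    have hwabs : ∀ j (x : ℝ), |-(w j) * x| ≤ |x| := by
      intro j x
      rcases hw j with h | h | h <;> rw [h] <;> simp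
    have hdTabs : ∀ i, |dT i| ≤ ε := by
      intro i
      by_cases h : isZ (p.2.2.1 i - p.2.2.2.1 i) <;>
        simp [hdT, h, abs_of_pos hεpos, hεpos.le]
    have hdTne : ∀ i, dT i ≠ 0 → ¬ isZ (p.2.2.1 i - p.2.2.2.1 i) := by
      intro i hne h
      exact hne (by simp [hdT, h])
    have hdAabs : ∀ j, |dA j| ≤ ε := by
      intro j
      by_cases h : (¬ isZ (p.2.2.2.2.1 j - p.2.2.2.2.2 j)) ∧
         (∃ i, ¬ isZ (p.2.2.1 i - p.2.2.2.1 i) ∧ isZ (p.1 i j - p.2.1 i j))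
      · simp only [hdA, if_pos h]
        calc |-(w j) * ε| ≤ |ε| := hwabs j ε
        _ = ε := abs_of_pos hεpos
      · simp [hdA, h, hεpos.le]
    have hdAne : ∀ j, dA j ≠ 0 → ¬ isZ (p.2.2.2.2.1 j - p.2.2.2.2.2 j) := by
      intro j hne
      by_cases h : (¬ isZ (p.2.2.2.2.1 j - p.2.2.2.2.2 j)) ∧
         (∃ i, ¬ isZ (p.2.2.1 i - p.2.2.2.1 i) ∧ isZ (p.1 i j - p.2.1 i j))
      · exact h.1
      · exact absurd (by simp [hdA, h]) hne
    have hdBabs : ∀ i j, |dB i j| ≤ ε := by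
      intro i j
      by_cases hT : isZ (p.2.2.1 i - p.2.2.2.1 i)
      · have : dB i j = -(dA j) := by simp [hdB, hdT, hT]
        rw [this, abs_neg]
        exact hdAabs j
      · by_cases h : (¬ isZ (p.2.2.2.2.1 j - p.2.2.2.2.2 j)) ∧
           (∃ i, ¬ isZ (p.2.2.1 i - p.2.2.2.1 i) ∧ isZ (p.1 i j - p.2.1 i j))
        · have : dB i j = 0 := by simp only [hdB, hdT, hdA, if_neg hT, if_pos h]; ring
          simp [this, hεpos.le]
        · have : dB i j = -(w j) * ε := by simp [hdB, hdT, hdA, hT, h]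
          rw [this]
          calc |-(w j) * ε| ≤ |ε| := hwabs j ε
          _ = ε := abs_of_pos hεpos
    have hdBint : ∀ i j, isZ (p.1 i j - p.2.1 i j) → dB i j = 0 := by
      intro i j hBij
      by_cases hT : isZ (p.2.2.1 i - p.2.2.2.1 i)
      · have hA : isZ (p.2.2.2.2.1 j - p.2.2.2.2.2 j) := by
          have e : p.2.2.2.2.1 j - p.2.2.2.2.2 j
              = -(p.1 i j - p.2.1 i j) - w j * (p.2.2.1 i - p.2.2.2.1 i) := by
            linear_combination heq i j
          rw [e]
          exact isZ_sub (isZ_neg hBij) (isZ_w (hw j) hT)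
        have hcond : ¬((¬ isZ (p.2.2.2.2.1 j - p.2.2.2.2.2 j)) ∧
           (∃ i, ¬ isZ (p.2.2.1 i - p.2.2.2.1 i) ∧ isZ (p.1 i j - p.2.1 i j))) :=
          fun hh => hh.1 hA
        simp [hdB, hdT, hdA, hT, hcond]
      · by_cases hA : isZ (p.2.2.2.2.1 j - p.2.2.2.2.2 j)
        · have hw0 : w j = 0 := by
            rcases hw j with h | h | h
            · exact h
            · exfalso
              apply hT
              have hh := heq i j
              rw [h] at hh
              have e : p.2.2.1 i - p.2.2.2.1 i
                  = -(p.1 i j - p.2.1 i j) - (p.2.2.2.2.1 j - p.2.2.2.2.2 j) := by linarith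
              rw [e]
              exact isZ_sub (isZ_neg hBij) hA
            · exfalso
              apply hT
              have hh := heq i j
              rw [h] at hh
              have e : p.2.2.1 i - p.2.2.2.1 i
                  = (p.1 i j - p.2.1 i j) + (p.2.2.2.2.1 j - p.2.2.2.2.2 j) := by linarith
              rw [e]
              exact isZ_add hBij hA
          have hcond : ¬((¬ isZ (p.2.2.2.2.1 j - p.2.2.2.2.2 j)) ∧
             (∃ i, ¬ isZ (p.2.2.1 i - p.2.2.2.1 i) ∧ isZ (p.1 i j - p.2.1 i j))) :=
            fun hh => hh.1 hA
          simp [hdB, hdA, hcond, hw0]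
        · have hcond : (¬ isZ (p.2.2.2.2.1 j - p.2.2.2.2.2 j)) ∧
             (∃ i, ¬ isZ (p.2.2.1 i - p.2.2.2.1 i) ∧ isZ (p.1 i j - p.2.1 i j)) :=
            ⟨hA, ⟨i, hT, hBij⟩⟩
          simp only [hdB, hdA, if_pos hcond, hdT, if_neg hT]
          ring
    have hd0 := zero_dir
      ((fun i j => if ¬(p.1 i j = 0 ∨ p.1 i j = 1) then dB i j else 0),
       (fun i j => if ¬(p.1 i j = 0 ∨ p.1 i j = 1) then 0 else -(dB i j)),
       (fun i => if ¬(p.2.2.1 i = 0 ∨ p.2.2.1 i = 1) then dT i else 0),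
       (fun i => if ¬(p.2.2.1 i = 0 ∨ p.2.2.1 i = 1) then 0 else -(dT i)),
       (fun j => if ¬(p.2.2.2.2.1 j = 0 ∨ p.2.2.2.2.1 j = 1) then dA j else 0),
       (fun j => if ¬(p.2.2.2.2.1 j = 0 ∨ p.2.2.2.2.1 j = 1) then 0 else -(dA j)))
      (by
        intro i j
        simp only []
        by_cases h1 : ¬(p.1 i j = 0 ∨ p.1 i j = 1) <;>
          by_cases h2 : ¬(p.2.2.1 i = 0 ∨ p.2.2.1 i = 1) <;>
          by_cases h3 : ¬(p.2.2.2.2.1 j = 0 ∨ p.2.2.2.2.1 j = 1) <;>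
          simp only [if_pos, if_neg, h1, h2, h3, if_true, if_false, ite_true, ite_false,
            not_true, not_false_iff] <;>
          simp [hdB] <;> ring)
      (by
        intro i j
        by_cases h : ¬(p.1 i j = 0 ∨ p.1 i j = 1)
        · refine Or.inr ?_
          obtain ⟨ha, hb⟩ := frlt _ (bB i j).1 (bB i j).2 h
          exact ⟨ha, hb, by simp only [if_pos h]; exact hdBabs i j⟩
        · exact Or.inl (by simp only [if_neg h])
      )
      (by
        intro i j
        by_cases h : ¬(p.1 i j = 0 ∨ p.1 i j = 1)
        · exact Or.inl (by simp only [if_pos h])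
        · by_cases hB0 : dB i j = 0
          · exact Or.inl (by simp only [if_neg h, hB0, neg_zero])
          · refine Or.inr ?_
            have hnB : ¬ isZ (p.1 i j - p.2.1 i j) := fun hz => hB0 (hdBint i j hz)
            have hfc : ¬(p.2.1 i j = 0 ∨ p.2.1 i j = 1) := fun hg =>
              hnB (isZ_sub (isZ_of01 (not_not.mp h)) (isZ_of01 hg))
            obtain ⟨ha, hb⟩ := frlt _ (bC i j).1 (bC i j).2 hfc
            exact ⟨ha, hb, by simp only [if_neg h, abs_neg]; exact hdBabs i j⟩
      )
      (by
        intro i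
        by_cases h : ¬(p.2.2.1 i = 0 ∨ p.2.2.1 i = 1)
        · refine Or.inr ?_
          obtain ⟨ha, hb⟩ := frlt _ (bT1 i).1 (bT1 i).2 h
          exact ⟨ha, hb, by simp only [if_pos h]; exact hdTabs i⟩
        · exact Or.inl (by simp only [if_neg h])
      )
      (by
        intro i
        by_cases h : ¬(p.2.2.1 i = 0 ∨ p.2.2.1 i = 1)
        · exact Or.inl (by simp only [if_pos h])
        · by_cases hT0 : dT i = 0
          · exact Or.inl (by simp only [if_neg h, hT0, neg_zero])
          · refine Or.inr ?_
            have hnT := hdTne i hT0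
            have hfc : ¬(p.2.2.2.1 i = 0 ∨ p.2.2.2.1 i = 1) := fun hg =>
              hnT (isZ_sub (isZ_of01 (not_not.mp h)) (isZ_of01 hg))
            obtain ⟨ha, hb⟩ := frlt _ (bT2 i).1 (bT2 i).2 hfc
            exact ⟨ha, hb, by simp only [if_neg h, abs_neg]; exact hdTabs i⟩
      )
      (by
        intro j
        by_cases h : ¬(p.2.2.2.2.1 j = 0 ∨ p.2.2.2.2.1 j = 1)
        · refine Or.inr ?_
          obtain ⟨ha, hb⟩ := frlt _ (bA1 j).1 (bA1 j).2 h
          exact ⟨ha, hb, by simp only [if_pos h]; exact hdAabs j⟩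
        · exact Or.inl (by simp only [if_neg h])
      )
      (by
        intro j
        by_cases h : ¬(p.2.2.2.2.1 j = 0 ∨ p.2.2.2.2.1 j = 1)
        · exact Or.inl (by simp only [if_pos h])
        · by_cases hA0 : dA j = 0
          · exact Or.inl (by simp only [if_neg h, hA0, neg_zero])
          · refine Or.inr ?_
            have hnA := hdAne j hA0
            have hfc : ¬(p.2.2.2.2.2 j = 0 ∨ p.2.2.2.2.2 j = 1) := fun hg =>
              hnA (isZ_sub (isZ_of01 (not_not.mp h)) (isZ_of01 hg))
            obtain ⟨ha, hb⟩ := frlt _ (bA2 j).1 (bA2 j).2 hfc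
            exact ⟨ha, hb, by simp only [if_neg h, abs_neg]; exact hdAabs j⟩
      )
    have hdTi₀ : dT i₀ = ε := by simp [hdT, hi₀]
    by_cases hf : ¬(p.2.2.1 i₀ = 0 ∨ p.2.2.1 i₀ = 1)
    · have he := congrFun (congrArg (fun q => q.2.2.1) hd0) i₀
      simp only [if_pos hf, hdTi₀] at he
      exact hεpos.ne' (by simpa using he)
    · have he := congrFun (congrArg (fun q => q.2.2.2.1) hd0) i₀
      simp only [if_neg hf, hdTi₀] at he
      have : -ε = 0 := by simpa using he
      exact hεpos.ne' (by linarith)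
  -- Claim: every α-difference is an integer
  have NA : ∀ j, isZ (p.2.2.2.2.1 j - p.2.2.2.2.2 j) := by
    by_contra hc
    simp only [not_forall] at hc
    obtain ⟨j₀, hj₀⟩ := hc
    set dA : Fin n → ℝ := fun j => if j = j₀ then ε else 0 with hdA
    set dB : Fin k → Fin n → ℝ := fun i j => if j = j₀ then -ε else 0 with hdB
    have hBfr : ∀ i, ¬ isZ (p.1 i j₀ - p.2.1 i j₀) := by
      intro i h
      apply hj₀
      have e : p.2.2.2.2.1 j₀ - p.2.2.2.2.2 j₀
          = -(p.1 i j₀ - p.2.1 i j₀) - w j₀ * (p.2.2.1 i - p.2.2.2.1 i) := by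
        linear_combination heq i j₀
      rw [e]
      exact isZ_sub (isZ_neg h) (isZ_w (hw j₀) (NT i))
    have hdAabs : ∀ j, |dA j| ≤ ε := by
      intro j
      by_cases h : j = j₀ <;> simp [hdA, h, abs_of_pos hεpos, hεpos.le]
    have hdBabs : ∀ i j, |dB i j| ≤ ε := by
      intro i j
      by_cases h : j = j₀ <;> simp [hdB, h, abs_of_pos hεpos, hεpos.le]
    have hdBne : ∀ i j, dB i j ≠ 0 → ¬ isZ (p.1 i j - p.2.1 i j) := by
      intro i j hne
      by_cases h : j = j₀
      · rw [h]; exact hBfr i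
      · exact absurd (by simp [hdB, h]) hne
    have hdAne : ∀ j, dA j ≠ 0 → ¬ isZ (p.2.2.2.2.1 j - p.2.2.2.2.2 j) := by
      intro j hne
      by_cases h : j = j₀
      · rw [h]; exact hj₀
      · exact absurd (by simp [hdA, h]) hne
    have hd0 := zero_dir
      ((fun i j => if ¬(p.1 i j = 0 ∨ p.1 i j = 1) then dB i j else 0),
       (fun i j => if ¬(p.1 i j = 0 ∨ p.1 i j = 1) then 0 else -(dB i j)),
       0, 0,
       (fun j => if ¬(p.2.2.2.2.1 j = 0 ∨ p.2.2.2.2.1 j = 1) then dA j else 0),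
       (fun j => if ¬(p.2.2.2.2.1 j = 0 ∨ p.2.2.2.2.1 j = 1) then 0 else -(dA j)))
      (by
        intro i j
        simp only [Pi.zero_apply]
        have e1 := ifsplit (¬(p.1 i j = 0 ∨ p.1 i j = 1)) (dB i j)
        have e2 := ifsplit (¬(p.2.2.2.2.1 j = 0 ∨ p.2.2.2.2.1 j = 1)) (dA j)
        have e3 : dB i j + dA j = 0 := by
          by_cases h : j = j₀ <;> simp [hdB, hdA, h]
        linarith [e1, e2, e3])
      (by
        intro i j
        by_cases h : ¬(p.1 i j = 0 ∨ p.1 i j = 1)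
        · refine Or.inr ?_
          obtain ⟨ha, hb⟩ := frlt _ (bB i j).1 (bB i j).2 h
          exact ⟨ha, hb, by simp only [if_pos h]; exact hdBabs i j⟩
        · exact Or.inl (by simp only [if_neg h])
      )
      (by
        intro i j
        by_cases h : ¬(p.1 i j = 0 ∨ p.1 i j = 1)
        · exact Or.inl (by simp only [if_pos h])
        · by_cases hB0 : dB i j = 0
          · exact Or.inl (by simp only [if_neg h, hB0, neg_zero])
          · refine Or.inr ?_
            have hnB := hdBne i j hB0
            have hfc : ¬(p.2.1 i j = 0 ∨ p.2.1 i j = 1) := fun hg =>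
              hnB (isZ_sub (isZ_of01 (not_not.mp h)) (isZ_of01 hg))
            obtain ⟨ha, hb⟩ := frlt _ (bC i j).1 (bC i j).2 hfc
            exact ⟨ha, hb, by simp only [if_neg h, abs_neg]; exact hdBabs i j⟩
      )
      (fun i => Or.inl rfl) (fun i => Or.inl rfl)
      (by
        intro j
        by_cases h : ¬(p.2.2.2.2.1 j = 0 ∨ p.2.2.2.2.1 j = 1)
        · refine Or.inr ?_
          obtain ⟨ha, hb⟩ := frlt _ (bA1 j).1 (bA1 j).2 h
          exact ⟨ha, hb, by simp only [if_pos h]; exact hdAabs j⟩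
        · exact Or.inl (by simp only [if_neg h])
      )
      (by
        intro j
        by_cases h : ¬(p.2.2.2.2.1 j = 0 ∨ p.2.2.2.2.1 j = 1)
        · exact Or.inl (by simp only [if_pos h])
        · by_cases hA0 : dA j = 0
          · exact Or.inl (by simp only [if_neg h, hA0, neg_zero])
          · refine Or.inr ?_
            have hnA := hdAne j hA0
            have hfc : ¬(p.2.2.2.2.2 j = 0 ∨ p.2.2.2.2.2 j = 1) := fun hg =>
              hnA (isZ_sub (isZ_of01 (not_not.mp h)) (isZ_of01 hg))
            obtain ⟨ha, hb⟩ := frlt _ (bA2 j).1 (bA2 j).2 hfc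
            exact ⟨ha, hb, by simp only [if_neg h, abs_neg]; exact hdAabs j⟩
      )
    have hdAj₀ : dA j₀ = ε := by simp [hdA]
    by_cases hf : ¬(p.2.2.2.2.1 j₀ = 0 ∨ p.2.2.2.2.1 j₀ = 1)
    · have he := congrFun (congrArg (fun q => q.2.2.2.2.1) hd0) j₀
      simp only [if_pos hf, hdAj₀] at he
      exact hεpos.ne' (by simpa using he)
    · have he := congrFun (congrArg (fun q => q.2.2.2.2.2) hd0) j₀
      simp only [if_neg hf, hdAj₀] at he
      have : -ε = 0 := by simpa using he
      exact hεpos.ne' (by linarith)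
  have hBZ : ∀ i j, isZ (p.1 i j - p.2.1 i j) := by
    intro i j
    have e : p.1 i j - p.2.1 i j
        = -(w j * (p.2.2.1 i - p.2.2.2.1 i)) - (p.2.2.2.2.1 j - p.2.2.2.2.2 j) := by
      linear_combination heq i j
    rw [e]
    exact isZ_sub (isZ_neg (isZ_w (hw j) (NT i))) (NA j)
  refine ⟨fun i j => ?_, fun i j => ?_, fun i => ?_, fun i => ?_, fun j => ?_, fun j => ?_⟩
  · exact (pair01 (bB i j).1 (bB i j).2 (bC i j).1 (bC i j).2 (NB1 i j) (hBZ i j)).1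
  · exact (pair01 (bB i j).1 (bB i j).2 (bC i j).1 (bC i j).2 (NB1 i j) (hBZ i j)).2
  · exact (pair01 (bT1 i).1 (bT1 i).2 (bT2 i).1 (bT2 i).2 (NB2 i) (NT i)).1
  · exact (pair01 (bT1 i).1 (bT1 i).2 (bT2 i).1 (bT2 i).2 (NB2 i) (NT i)).2
  · exact (pair01 (bA1 j).1 (bA1 j).2 (bA2 j).1 (bA2 j).2 (NB3 j) (NA j)).1
  · exact (pair01 (bA1 j).1 (bA1 j).2 (bA2 j).1 (bA2 j).2 (NB3 j) (NA j)).2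
end

section
/- Let w ∈ {0, ±1}^n and let R be the polyhedral cone of points (β¹,γ¹,θ¹,…,β^k,γ^k,θ^k,α) with β^i, γ^i ∈ ℝ^n_{≥0}, θ^i ∈ ℝ²_{≥0}, α ∈ ℝ^n, satisfying β^i − γ^i + w θ^i_1 − w θ^i_2 + α = 0 for all i ∈ {1,…,k}. Then every extreme ray of R with sup-norm equal to 1 has all components in {0, ±1}. -/
lemma eps_lemma {ι : Type*} [Finite ι] (x d : ι → ℝ) (hx : ∀ i, 0 ≤ x i)
    (h0 : ∀ i, x i = 0 → d i = 0) : ∃ ε : ℝ, 0 < ε ∧ ∀ i, ε * |d i| ≤ x i := by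
  have h : ∀ᶠ ε : ℝ in nhdsWithin 0 (Set.Ioi 0), ∀ i, ε * |d i| ≤ x i := by
    rw [Filter.eventually_all]
    intro i
    rcases eq_or_lt_of_le (hx i) with h | h
    · filter_upwards with ε
      rw [h0 i h.symm]
      simp [← h]
    · have hbase : Filter.Tendsto (fun ε : ℝ => ε) (nhdsWithin 0 (Set.Ioi 0)) (nhds 0) :=
        Filter.tendsto_id.mono_left nhdsWithin_le_nhds
      have ht : Filter.Tendsto (fun ε : ℝ => ε * |d i|) (nhdsWithin 0 (Set.Ioi 0)) (nhds 0) := by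
        simpa using hbase.mul_const |d i|
      exact (ht.eventually_lt_const h).mono fun _ h => h.le
  obtain ⟨ε, h1, h2⟩ := (h.and eventually_mem_nhdsWithin).exists
  exact ⟨ε, h2, h1⟩



/-- every extreme ray of the recession cone R, normalized to sup-norm 1,
has all components in {0, ±1}. Points are tuples (β, γ, θ₁, θ₂, α). -/
theorem stmt2 (n k : ℕ) (w : Fin n → ℝ) (hw : ∀ j, w j = 0 ∨ w j = 1 ∨ w j = -1)
    (R : Set ((Fin k → Fin n → ℝ) × (Fin k → Fin n → ℝ) × (Fin k → ℝ) × (Fin k → ℝ) ×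
      (Fin n → ℝ)))
    (hR : ∀ p, p ∈ R ↔
      (∀ i j, p.1 i j - p.2.1 i j + w j * p.2.2.1 i - w j * p.2.2.2.1 i
          + p.2.2.2.2 j = 0) ∧
      (∀ i j, 0 ≤ p.1 i j) ∧ (∀ i j, 0 ≤ p.2.1 i j) ∧
      (∀ i, 0 ≤ p.2.2.1 i) ∧ (∀ i, 0 ≤ p.2.2.2.1 i))
    (r : (Fin k → Fin n → ℝ) × (Fin k → Fin n → ℝ) × (Fin k → ℝ) × (Fin k → ℝ) ×
      (Fin n → ℝ))
    (hrR : r ∈ R) (hr0 : r ≠ 0)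
    -- r is an extreme ray: it cannot be written as a sum of two elements of R
    -- neither of which is a nonnegative multiple of r
    (hext : ∀ y ∈ R, ∀ z ∈ R, r = y + z →
      (∃ c : ℝ, 0 ≤ c ∧ y = c • r) ∨ (∃ c : ℝ, 0 ≤ c ∧ z = c • r))
    -- sup-norm of r is 1
    (hbd : (∀ i j, |r.1 i j| ≤ 1) ∧ (∀ i j, |r.2.1 i j| ≤ 1) ∧ (∀ i, |r.2.2.1 i| ≤ 1) ∧
      (∀ i, |r.2.2.2.1 i| ≤ 1) ∧ (∀ j, |r.2.2.2.2 j| ≤ 1))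
    (hone : (∃ i j, |r.1 i j| = 1) ∨ (∃ i j, |r.2.1 i j| = 1) ∨ (∃ i, |r.2.2.1 i| = 1) ∨
      (∃ i, |r.2.2.2.1 i| = 1) ∨ (∃ j, |r.2.2.2.2 j| = 1)) :
    (∀ i j, r.1 i j = 0 ∨ r.1 i j = 1 ∨ r.1 i j = -1) ∧
    (∀ i j, r.2.1 i j = 0 ∨ r.2.1 i j = 1 ∨ r.2.1 i j = -1) ∧
    (∀ i, r.2.2.1 i = 0 ∨ r.2.2.1 i = 1 ∨ r.2.2.1 i = -1) ∧
    (∀ i, r.2.2.2.1 i = 0 ∨ r.2.2.2.1 i = 1 ∨ r.2.2.2.1 i = -1) ∧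
    (∀ j, r.2.2.2.2 j = 0 ∨ r.2.2.2.2 j = 1 ∨ r.2.2.2.2 j = -1) := by
  classical
  obtain ⟨b, g, th1, th2, al⟩ := r
  simp only at hone hbd ⊢
  have heq : ∀ i j, b i j - g i j + w j * th1 i - w j * th2 i + al j = 0 :=
    ((hR _).mp hrR).1
  have hb0 : ∀ i j, 0 ≤ b i j := ((hR _).mp hrR).2.1
  have hg0 : ∀ i j, 0 ≤ g i j := ((hR _).mp hrR).2.2.1
  have h10 : ∀ i, 0 ≤ th1 i := ((hR _).mp hrR).2.2.2.1
  have h20 : ∀ i, 0 ≤ th2 i := ((hR _).mp hrR).2.2.2.2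
  -- KEY: any tangent direction is a multiple of r
  have key : ∀ (db dg : Fin k → Fin n → ℝ) (dh1 dh2 : Fin k → ℝ) (dda : Fin n → ℝ),
      (∀ i j, db i j - dg i j + w j * dh1 i - w j * dh2 i + dda j = 0) →
      (∀ i j, b i j = 0 → db i j = 0) → (∀ i j, g i j = 0 → dg i j = 0) →
      (∀ i, th1 i = 0 → dh1 i = 0) → (∀ i, th2 i = 0 → dh2 i = 0) →
      ∃ μ : ℝ, (∀ i j, db i j = μ * b i j) ∧ (∀ i j, dg i j = μ * g i j) ∧
        (∀ i, dh1 i = μ * th1 i) ∧ (∀ i, dh2 i = μ * th2 i) ∧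
        (∀ j, dda j = μ * al j) := by
    intro db dg dh1 dh2 dda hde hsb hsg hs1 hs2
    -- find ε
    set ι := ((Fin k × Fin n) ⊕ (Fin k × Fin n)) ⊕ (Fin k ⊕ Fin k) with hι
    obtain ⟨ε, hε, hbd'⟩ := eps_lemma
      (ι := ι)
      (Sum.elim (Sum.elim (fun p => b p.1 p.2) (fun p => g p.1 p.2)) (Sum.elim th1 th2))
      (Sum.elim (Sum.elim (fun p => db p.1 p.2) (fun p => dg p.1 p.2)) (Sum.elim dh1 dh2))
      (by rintro ((p | p) | (i | i)) <;> simp [hb0, hg0, h10, h20])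
      (by rintro ((p | p) | (i | i)) <;> simp <;>
            [exact hsb p.1 p.2; exact hsg p.1 p.2; exact hs1 i; exact hs2 i])
    have hεb : ∀ i j, ε * |db i j| ≤ b i j := fun i j => hbd' (.inl (.inl (i, j)))
    have hεg : ∀ i j, ε * |dg i j| ≤ g i j := fun i j => hbd' (.inl (.inr (i, j)))
    have hε1 : ∀ i, ε * |dh1 i| ≤ th1 i := fun i => hbd' (.inr (.inl i))
    have hε2 : ∀ i, ε * |dh2 i| ≤ th2 i := fun i => hbd' (.inr (.inr i))
    have habs : ∀ x y : ℝ, ε * |y| ≤ x → (0 ≤ (x + ε * y) / 2 ∧ 0 ≤ (x - ε * y) / 2) := by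
      intro x y hxy
      have h1 := neg_abs_le y
      have h2 := le_abs_self y
      have h3 : 0 ≤ ε * |y| := mul_nonneg hε.le (abs_nonneg y)
      constructor <;> nlinarith
    have hyR : (fun i j => (b i j + ε * db i j) / 2, fun i j => (g i j + ε * dg i j) / 2,
        fun i => (th1 i + ε * dh1 i) / 2, fun i => (th2 i + ε * dh2 i) / 2,
        fun j => (al j + ε * dda j) / 2) ∈ R := by
      rw [hR]
      refine ⟨fun i j => ?_, fun i j => (habs _ _ (hεb i j)).1, fun i j => (habs _ _ (hεg i j)).1,
        fun i => (habs _ _ (hε1 i)).1, fun i => (habs _ _ (hε2 i)).1⟩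
      have h1 := heq i j
      have h2 := hde i j
      simp only
      ring_nf
      nlinarith [heq i j, hde i j]
    have hzR : (fun i j => (b i j - ε * db i j) / 2, fun i j => (g i j - ε * dg i j) / 2,
        fun i => (th1 i - ε * dh1 i) / 2, fun i => (th2 i - ε * dh2 i) / 2,
        fun j => (al j - ε * dda j) / 2) ∈ R := by
      rw [hR]
      refine ⟨fun i j => ?_, fun i j => (habs _ _ (hεb i j)).2, fun i j => (habs _ _ (hεg i j)).2,
        fun i => (habs _ _ (hε1 i)).2, fun i => (habs _ _ (hε2 i)).2⟩
      simp only
      nlinarith [heq i j, hde i j]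
    have hsum : (b, g, th1, th2, al) =
        (fun i j => (b i j + ε * db i j) / 2, fun i j => (g i j + ε * dg i j) / 2,
        fun i => (th1 i + ε * dh1 i) / 2, fun i => (th2 i + ε * dh2 i) / 2,
        fun j => (al j + ε * dda j) / 2) +
        (fun i j => (b i j - ε * db i j) / 2, fun i j => (g i j - ε * dg i j) / 2,
        fun i => (th1 i - ε * dh1 i) / 2, fun i => (th2 i - ε * dh2 i) / 2,
        fun j => (al j - ε * dda j) / 2) := by
      simp only [Prod.mk_add_mk, Prod.mk.injEq]
      refine ⟨?_, ?_, ?_, ?_, ?_⟩ <;>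
        (first | funext i j | funext i) <;>
        simp only [Pi.add_apply] <;> ring
    rcases hext _ hyR _ hzR hsum with ⟨c, _, hy⟩ | ⟨c, _, hy⟩ <;>
      simp only [Prod.smul_mk, Prod.mk.injEq] at hy <;>
      obtain ⟨e1, e2, e3, e4, e5⟩ := hy
    · refine ⟨(2 * c - 1) / ε, fun i j => ?_, fun i j => ?_, fun i => ?_, fun i => ?_,
        fun j => ?_⟩
      · have := congrFun (congrFun e1 i) j
        simp only [Pi.smul_apply, smul_eq_mul] at this
        field_simp
        linarith
      · have := congrFun (congrFun e2 i) j
        simp only [Pi.smul_apply, smul_eq_mul] at this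
        field_simp
        linarith
      · have := congrFun e3 i
        simp only [Pi.smul_apply, smul_eq_mul] at this
        field_simp
        linarith
      · have := congrFun e4 i
        simp only [Pi.smul_apply, smul_eq_mul] at this
        field_simp
        linarith
      · have := congrFun e5 j
        simp only [Pi.smul_apply, smul_eq_mul] at this
        field_simp
        linarith
    · refine ⟨(1 - 2 * c) / ε, fun i j => ?_, fun i j => ?_, fun i => ?_, fun i => ?_,
        fun j => ?_⟩
      · have := congrFun (congrFun e1 i) j
        simp only [Pi.smul_apply, smul_eq_mul] at this
        field_simp
        linarith
      · have := congrFun (congrFun e2 i) j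
        simp only [Pi.smul_apply, smul_eq_mul] at this
        field_simp
        linarith
      · have := congrFun e3 i
        simp only [Pi.smul_apply, smul_eq_mul] at this
        field_simp
        linarith
      · have := congrFun e4 i
        simp only [Pi.smul_apply, smul_eq_mul] at this
        field_simp
        linarith
      · have := congrFun e5 j
        simp only [Pi.smul_apply, smul_eq_mul] at this
        field_simp
        linarith
  
  -- degenerate case 1 : some (i,j) with both b and g nonzero
  by_cases hbg : ∀ i j, b i j = 0 ∨ g i j = 0
  swap
  · push_neg at hbg
    obtain ⟨i0, j0, hbne, hgne⟩ := hbg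
    obtain ⟨μ, k1, k2, k3, k4, k5⟩ := key
      (fun i j => if (i, j) = (i0, j0) then 1 else 0)
      (fun i j => if (i, j) = (i0, j0) then 1 else 0)
      (fun _ => 0) (fun _ => 0) (fun _ => 0)
      (by intro i j; ring)
      (by intro i j h
          by_cases hc : (i, j) = (i0, j0)
          · simp only [Prod.mk.injEq] at hc; obtain ⟨rfl, rfl⟩ := hc; exact absurd h hbne
          · simp [hc])
      (by intro i j h
          by_cases hc : (i, j) = (i0, j0)
          · simp only [Prod.mk.injEq] at hc; obtain ⟨rfl, rfl⟩ := hc; exact absurd h hgne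
          · simp [hc])
      (fun _ _ => rfl) (fun _ _ => rfl)
    have hμb : μ * b i0 j0 = 1 := by have := k1 i0 j0; rw [if_pos rfl] at this; linarith
    have hμ0 : μ ≠ 0 := by intro h; rw [h, zero_mul] at hμb; norm_num at hμb
    have hbz : ∀ i j, (i, j) ≠ (i0, j0) → b i j = 0 := by
      intro i j h
      have := k1 i j; rw [if_neg h] at this
      rcases mul_eq_zero.mp this.symm with h' | h'
      · exact absurd h' hμ0
      · exact h'
    have hgz : ∀ i j, (i, j) ≠ (i0, j0) → g i j = 0 := by
      intro i j h
      have := k2 i j; rw [if_neg h] at this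
      rcases mul_eq_zero.mp this.symm with h' | h'
      · exact absurd h' hμ0
      · exact h'
    have h1z : ∀ i, th1 i = 0 := by
      intro i
      have := k3 i
      rcases mul_eq_zero.mp this.symm with h' | h'
      · exact absurd h' hμ0
      · exact h'
    have h2z : ∀ i, th2 i = 0 := by
      intro i
      have := k4 i
      rcases mul_eq_zero.mp this.symm with h' | h'
      · exact absurd h' hμ0
      · exact h'
    have halz : ∀ j, al j = 0 := by
      intro j
      have := k5 j
      rcases mul_eq_zero.mp this.symm with h' | h'
      · exact absurd h' hμ0
      · exact h'
    have hbgeq : b i0 j0 = g i0 j0 := by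
      have h2 : μ * g i0 j0 = 1 := by have := k2 i0 j0; rw [if_pos rfl] at this; linarith
      have := hμb.trans h2.symm
      exact mul_left_cancel₀ hμ0 this
    have hval : b i0 j0 = 1 := by
      have habs1 : |b i0 j0| = 1 := by
        rcases hone with ⟨i, j, h⟩ | ⟨i, j, h⟩ | ⟨i, h⟩ | ⟨i, h⟩ | ⟨j, h⟩
        · by_cases hc : (i, j) = (i0, j0)
          · simp only [Prod.mk.injEq] at hc; obtain ⟨rfl, rfl⟩ := hc; exact h
          · rw [hbz i j hc] at h; norm_num at h
        · by_cases hc : (i, j) = (i0, j0)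
          · simp only [Prod.mk.injEq] at hc; obtain ⟨rfl, rfl⟩ := hc; rw [hbgeq]; exact h
          · rw [hgz i j hc] at h; norm_num at h
        · rw [h1z i] at h; norm_num at h
        · rw [h2z i] at h; norm_num at h
        · rw [halz j] at h; norm_num at h
      rcases (abs_eq zero_le_one).mp habs1 with h | h
      · exact h
      · exfalso; have := hb0 i0 j0; rw [h] at this; norm_num at this
    refine ⟨?_, ?_, ?_, ?_, ?_⟩
    · intro i j
      by_cases hc : (i, j) = (i0, j0)
      · simp only [Prod.mk.injEq] at hc; obtain ⟨rfl, rfl⟩ := hc; right; left; exact hval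
      · left; exact hbz i j hc
    · intro i j
      by_cases hc : (i, j) = (i0, j0)
      · simp only [Prod.mk.injEq] at hc; obtain ⟨rfl, rfl⟩ := hc; right; left
        rw [← hbgeq]; exact hval
      · left; exact hgz i j hc
    · exact fun i => Or.inl (h1z i)
    · exact fun i => Or.inl (h2z i)
    · exact fun j => Or.inl (halz j)
  -- degenerate case 2 : some i with both th1 and th2 nonzero
  by_cases hth : ∀ i, th1 i = 0 ∨ th2 i = 0
  swap
  · push_neg at hth
    obtain ⟨i0, h1ne, h2ne⟩ := hth
    obtain ⟨μ, k1, k2, k3, k4, k5⟩ := key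
      (fun _ _ => 0) (fun _ _ => 0)
      (fun i => if i = i0 then 1 else 0)
      (fun i => if i = i0 then 1 else 0)
      (fun _ => 0)
      (by intro i j; ring)
      (fun _ _ _ => rfl) (fun _ _ _ => rfl)
      (by intro i h
          by_cases hc : i = i0
          · subst hc; exact absurd h h1ne
          · simp [hc])
      (by intro i h
          by_cases hc : i = i0
          · subst hc; exact absurd h h2ne
          · simp [hc])
    have hμb : μ * th1 i0 = 1 := by have := k3 i0; rw [if_pos rfl] at this; linarith
    have hμ0 : μ ≠ 0 := by intro h; rw [h, zero_mul] at hμb; norm_num at hμb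
    have hbz : ∀ i j, b i j = 0 := by
      intro i j
      have := k1 i j
      rcases mul_eq_zero.mp this.symm with h' | h'
      · exact absurd h' hμ0
      · exact h'
    have hgz : ∀ i j, g i j = 0 := by
      intro i j
      have := k2 i j
      rcases mul_eq_zero.mp this.symm with h' | h'
      · exact absurd h' hμ0
      · exact h'
    have h1z : ∀ i, i ≠ i0 → th1 i = 0 := by
      intro i h
      have := k3 i; rw [if_neg h] at this
      rcases mul_eq_zero.mp this.symm with h' | h'
      · exact absurd h' hμ0
      · exact h'
    have h2z : ∀ i, i ≠ i0 → th2 i = 0 := by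
      intro i h
      have := k4 i; rw [if_neg h] at this
      rcases mul_eq_zero.mp this.symm with h' | h'
      · exact absurd h' hμ0
      · exact h'
    have halz : ∀ j, al j = 0 := by
      intro j
      have := k5 j
      rcases mul_eq_zero.mp this.symm with h' | h'
      · exact absurd h' hμ0
      · exact h'
    have hbgeq : th1 i0 = th2 i0 := by
      have h2 : μ * th2 i0 = 1 := by have := k4 i0; rw [if_pos rfl] at this; linarith
      exact mul_left_cancel₀ hμ0 (hμb.trans h2.symm)
    have hval : th1 i0 = 1 := by
      have habs1 : |th1 i0| = 1 := by
        rcases hone with ⟨i, j, h⟩ | ⟨i, j, h⟩ | ⟨i, h⟩ | ⟨i, h⟩ | ⟨j, h⟩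
        · rw [hbz i j] at h; norm_num at h
        · rw [hgz i j] at h; norm_num at h
        · by_cases hc : i = i0
          · subst hc; exact h
          · rw [h1z i hc] at h; norm_num at h
        · by_cases hc : i = i0
          · subst hc; rw [hbgeq]; exact h
          · rw [h2z i hc] at h; norm_num at h
        · rw [halz j] at h; norm_num at h
      rcases (abs_eq zero_le_one).mp habs1 with h | h
      · exact h
      · exfalso; have := h10 i0; rw [h] at this; norm_num at this
    refine ⟨fun i j => Or.inl (hbz i j), fun i j => Or.inl (hgz i j), ?_, ?_,
      fun j => Or.inl (halz j)⟩
    · intro i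
      by_cases hc : i = i0
      · subst hc; right; left; exact hval
      · left; exact h1z i hc
    · intro i
      by_cases hc : i = i0
      · subst hc; right; left; rw [← hbgeq]; exact hval
      · left; exact h2z i hc
  -- main case
  obtain ⟨s, hsdef⟩ : ∃ s : Fin k → Fin n → ℝ, ∀ i j, s i j = b i j - g i j :=
    ⟨_, fun _ _ => rfl⟩
  obtain ⟨t, htdef⟩ : ∃ t : Fin k → ℝ, ∀ i, t i = th1 i - th2 i := ⟨_, fun _ => rfl⟩
  have hs : ∀ i j, s i j + w j * t i + al j = 0 := by
    intro i j
    rw [hsdef, htdef]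
    have h1 := heq i j
    have h2 : w j * (th1 i - th2 i) = w j * th1 i - w j * th2 i := by ring
    linarith
  have key2 : ∀ (dt : Fin k → ℝ) (dda : Fin n → ℝ),
      (∀ i, t i = 0 → dt i = 0) →
      (∀ i j, s i j = 0 → dda j + w j * dt i = 0) →
      ∃ μ : ℝ, (∀ i, dt i = μ * t i) ∧ (∀ j, dda j = μ * al j) := by
    intro dt dda hts hss
    obtain ⟨μ, k1, k2, k3, k4, k5⟩ := key
      (fun i j => if g i j = 0 then -dda j - w j * dt i else 0)
      (fun i j => if g i j = 0 then 0 else dda j + w j * dt i)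
      (fun i => if th2 i = 0 then dt i else 0)
      (fun i => if th2 i = 0 then 0 else -dt i)
      dda
      (by intro i j
          by_cases h1 : g i j = 0 <;> by_cases h2 : th2 i = 0 <;> simp [h1, h2] <;> ring)
      (by intro i j hb
          show (if g i j = 0 then -dda j - w j * dt i else 0) = 0
          by_cases h1 : g i j = 0
          · have hs0 : s i j = 0 := by rw [hsdef, hb, h1]; ring
            have := hss i j hs0
            rw [if_pos h1]; linarith
          · rw [if_neg h1])
      (by intro i j hg; simp [hg])
      (by intro i h1
          show (if th2 i = 0 then dt i else 0) = 0
          by_cases h2 : th2 i = 0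
          · have ht0 : t i = 0 := by rw [htdef, h1, h2]; ring
            rw [if_pos h2]; exact hts i ht0
          · rw [if_neg h2])
      (by intro i h2; simp [h2])
    refine ⟨μ, fun i => ?_, k5⟩
    have h3 := k3 i
    have h4 := k4 i
    have hr : μ * (th1 i - th2 i) = μ * th1 i - μ * th2 i := by ring
    rw [htdef]
    by_cases h2 : th2 i = 0
    · rw [if_pos h2] at h3 h4; linarith
    · rw [if_neg h2] at h3 h4; linarith
  by_cases hM : ∃ i0, t i0 ≠ 0
  · -- M1 : some t nonzero; connectivity argument
    obtain ⟨i0, hτ0⟩ := hM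
    set E : Fin k → Fin n → Prop := fun i j => s i j = 0 ∧ t i ≠ 0 ∧ al j ≠ 0 with hE
    set rel : (Fin k ⊕ Fin n) → (Fin k ⊕ Fin n) → Prop := fun u v =>
      ∃ i j, E i j ∧ ((u = .inl i ∧ v = .inr j) ∨ (u = .inr j ∧ v = .inl i)) with hrel
    set Reach : (Fin k ⊕ Fin n) → Prop :=
      fun v => Relation.ReflTransGen rel (.inl i0) v with hReach
    have hC : ∀ v, Reach v →
        (∀ i, v = .inl i → t i = t i0) ∧
        (∀ j, v = .inr j → al j = -(w j * t i0) ∧ al j ≠ 0) := by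
      intro v hv
      induction hv with
      | refl =>
        constructor
        · intro i hi
          rw [Sum.inl.injEq] at hi
          rw [← hi]
        · intro j hj; exact absurd hj (by simp)
      | tail huv e ih =>
        obtain ⟨i, j, ⟨he0, hti, haj⟩, hc⟩ := e
        rcases hc with ⟨hb', hc'⟩ | ⟨hb', hc'⟩
        · have hteq : t i = t i0 := ih.1 i hb'
          subst hc'
          constructor
          · intro i' hi'; exact absurd hi' (by simp)
          · intro j' hj'
            rw [Sum.inr.injEq] at hj'
            subst hj'
            have hcon := hs i j
            rw [he0, hteq] at hcon
            exact ⟨by linarith, haj⟩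
        · obtain ⟨ha, hane⟩ := ih.2 j hb'
          subst hc'
          constructor
          · intro i' hi'
            rw [Sum.inl.injEq] at hi'
            subst hi'
            have hcon := hs i j
            rw [he0, ha] at hcon
            rcases hw j with h3 | h3 | h3
            · exfalso; rw [h3] at ha; rw [ha] at hane; simp at hane
            · rw [h3] at hcon; linarith
            · rw [h3] at hcon; linarith
          · intro j' hj'; exact absurd hj' (by simp)
    have hedge : ∀ i j, E i j → (Reach (.inl i) ↔ Reach (.inr j)) := by
      intro i j he
      constructor
      · intro h; exact h.tail ⟨i, j, he, Or.inl ⟨rfl, rfl⟩⟩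
      · intro h; exact h.tail ⟨i, j, he, Or.inr ⟨rfl, rfl⟩⟩
    obtain ⟨μ, m1, m2⟩ := key2
      (fun i => if Reach (.inl i) then t i else 0)
      (fun j => if Reach (.inr j) then al j else 0)
      (by intro i h; simp [h])
      (by intro i j h0
          show (if Reach (.inr j) then al j else 0) + w j * (if Reach (.inl i) then t i else 0) = 0
          by_cases ha : al j = 0
          · by_cases ht : t i = 0
            · simp [ha, ht]
            · have hcon := hs i j
              rw [h0, ha] at hcon
              rw [ha, ite_self]
              by_cases hr : Reach (.inl i)
              · rw [if_pos hr]; linarith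
              · rw [if_neg hr]; ring
          · by_cases ht : t i = 0
            · exfalso
              have hcon := hs i j
              rw [h0, ht, mul_zero] at hcon
              exact ha (by linarith)
            · have he : E i j := ⟨h0, ht, ha⟩
              by_cases hr : Reach (.inl i)
              · have hr2 : Reach (.inr j) := (hedge i j he).mp hr
                rw [if_pos hr2, if_pos hr]
                have hcon := hs i j
                rw [h0] at hcon
                linarith
              · have hr2 : ¬Reach (.inr j) := fun h => hr ((hedge i j he).mpr h)
                rw [if_neg hr2, if_neg hr]
                ring)
    have hreach0 : Reach (.inl i0) := Relation.ReflTransGen.refl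
    have hμ1 : μ = 1 := by
      have h' := m1 i0
      rw [if_pos hreach0] at h'
      have h'' : (μ - 1) * t i0 = 0 := by linear_combination -h'
      rcases mul_eq_zero.mp h'' with h | h
      · linarith
      · exact absurd h hτ0
    have hTreach : ∀ i, t i ≠ 0 → Reach (.inl i) := by
      intro i h
      by_contra hr
      have := m1 i
      rw [if_neg hr, hμ1, one_mul] at this
      exact h this.symm
    have hAreach : ∀ j, al j ≠ 0 → Reach (.inr j) := by
      intro j h
      by_contra hr
      have := m2 j
      rw [if_neg hr, hμ1, one_mul] at this
      exact h this.symm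
    have hT : ∀ i, t i = 0 ∨ t i = t i0 := by
      intro i
      by_cases h : t i = 0
      · exact Or.inl h
      · exact Or.inr ((hC _ (hTreach i h)).1 i rfl)
    have hA : ∀ j, al j = 0 ∨ al j = -(w j * t i0) := by
      intro j
      by_cases h : al j = 0
      · exact Or.inl h
      · exact Or.inr ((hC _ (hAreach j h)).2 j rfl).1
    have hS : ∀ i j, s i j = 0 ∨ s i j = t i0 ∨ s i j = -(t i0) := by
      intro i j
      have hcon := hs i j
      rcases hT i with h1 | h1 <;> rcases hA j with h2 | h2 <;>
        rw [h1, h2] at hcon <;> rcases hw j with h3 | h3 | h3 <;> rw [h3] at hcon 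
      all_goals first
        | (left; linarith)
        | (right; left; linarith)
        | (right; right; linarith)
    have hτ1 : t i0 = 1 ∨ t i0 = -1 := by
      have habs : |t i0| = 1 := by
        rcases hone with ⟨i, j, h⟩ | ⟨i, j, h⟩ | ⟨i, h⟩ | ⟨i, h⟩ | ⟨j, h⟩
        · rcases hbg i j with hb | hg
          · rw [hb] at h; norm_num at h
          · have hv : b i j = s i j := by rw [hsdef, hg]; ring
            rw [hv] at h
            rcases hS i j with h' | h' | h' <;> rw [h'] at h
            · norm_num at h
            · exact h
            · rwa [abs_neg] at h
        · rcases hbg i j with hb | hg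
          · have hv : g i j = -(s i j) := by rw [hsdef, hb]; ring
            rw [hv, abs_neg] at h
            rcases hS i j with h' | h' | h' <;> rw [h'] at h
            · norm_num at h
            · exact h
            · rwa [abs_neg] at h
          · rw [hg] at h; norm_num at h
        · rcases hth i with h1 | h2
          · rw [h1] at h; norm_num at h
          · have hv : th1 i = t i := by rw [htdef, h2]; ring
            rw [hv] at h
            rcases hT i with h' | h' <;> rw [h'] at h
            · norm_num at h
            · exact h
        · rcases hth i with h1 | h2
          · have hv : th2 i = -(t i) := by rw [htdef, h1]; ring
            rw [hv, abs_neg] at h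
            rcases hT i with h' | h' <;> rw [h'] at h
            · norm_num at h
            · exact h
          · rw [h2] at h; norm_num at h
        · rcases hA j with h' | h' <;> rw [h'] at h
          · norm_num at h
          · rw [abs_neg] at h
            rcases hw j with h3 | h3 | h3 <;> rw [h3] at h
            · rw [zero_mul] at h; norm_num at h
            · rwa [one_mul] at h
            · rwa [neg_one_mul, abs_neg] at h
      exact (abs_eq zero_le_one).mp habs
    refine ⟨?_, ?_, ?_, ?_, ?_⟩
    · intro i j
      rcases hbg i j with hb | hg
      · left; exact hb
      · have hv : b i j = s i j := by rw [hsdef, hg]; ring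
        rcases hS i j with h | h | h <;> rcases hτ1 with h2 | h2 <;>
          simp only [hv, h, h2] <;> norm_num
    · intro i j
      rcases hbg i j with hb | hg
      · have hv : g i j = -(s i j) := by rw [hsdef, hb]; ring
        rcases hS i j with h | h | h <;> rcases hτ1 with h2 | h2 <;>
          simp only [hv, h, h2] <;> norm_num
      · left; exact hg
    · intro i
      rcases hth i with h1 | h2
      · left; exact h1
      · have hv : th1 i = t i := by rw [htdef, h2]; ring
        rcases hT i with h | h <;> rcases hτ1 with h2' | h2' <;>
          simp only [hv, h, h2'] <;> norm_num
    · intro i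
      rcases hth i with h1 | h2
      · have hv : th2 i = -(t i) := by rw [htdef, h1]; ring
        rcases hT i with h | h <;> rcases hτ1 with h2' | h2' <;>
          simp only [hv, h, h2'] <;> norm_num
      · left; exact h2
    · intro j
      rcases hA j with h | h
      · left; exact h
      · rcases hw j with h3 | h3 | h3 <;> rcases hτ1 with h2 | h2 <;>
          simp only [h, h3, h2] <;> norm_num
  · -- M0 : all t zero
    push_neg at hM
    have hth0 : ∀ i, th1 i = 0 ∧ th2 i = 0 := by
      intro i
      have h' := hM i
      rw [htdef] at h'
      rcases hth i with h | h
      · exact ⟨h, by linarith⟩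
      · exact ⟨by linarith, h⟩
    have hsal : ∀ i j, s i j = -(al j) := by
      intro i j
      have hcon := hs i j
      rw [hM i, mul_zero] at hcon
      linarith
    have huniq : ∀ j1 j2, al j1 ≠ 0 → al j2 ≠ 0 → j1 = j2 := by
      intro j1 j2 h1 h2
      by_contra hne
      obtain ⟨μ, m1, m2⟩ := key2 (fun _ => 0) (fun j => if j = j1 then 1 else 0)
        (fun _ _ => rfl)
        (by intro i j h0
            show (if j = j1 then (1:ℝ) else 0) + w j * 0 = 0
            rw [mul_zero, add_zero, if_neg]
            intro hj
            subst hj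
            rw [hsal] at h0
            exact h1 (by linarith)
            )
      have e1 := m2 j1
      rw [if_pos rfl] at e1
      have e2 := m2 j2
      rw [if_neg (fun h => hne h.symm)] at e2
      rcases mul_eq_zero.mp e2.symm with h | h
      · rw [h, zero_mul] at e1; norm_num at e1
      · exact h2 h
    have hone' : ∃ j0, |al j0| = 1 := by
      rcases hone with ⟨i, j, h⟩ | ⟨i, j, h⟩ | ⟨i, h⟩ | ⟨i, h⟩ | ⟨j, h⟩
      · rcases hbg i j with hb | hg
        · rw [hb] at h; norm_num at h
        · refine ⟨j, ?_⟩
          have hv : b i j = -(al j) := by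
            have h' := hsal i j
            rw [hsdef, hg] at h'
            linarith
          rw [hv, abs_neg] at h
          exact h
      · rcases hbg i j with hb | hg
        · refine ⟨j, ?_⟩
          have hv : g i j = al j := by
            have h' := hsal i j
            rw [hsdef, hb] at h'
            linarith
          rwa [hv] at h
        · rw [hg] at h; norm_num at h
      · rw [(hth0 i).1] at h; norm_num at h
      · rw [(hth0 i).2] at h; norm_num at h
      · exact ⟨j, h⟩
    obtain ⟨j0, hj0⟩ := hone'
    have hj0ne : al j0 ≠ 0 := by
      intro h; rw [h] at hj0; norm_num at hj0
    have halv : al j0 = 1 ∨ al j0 = -1 := (abs_eq zero_le_one).mp hj0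
    have halz : ∀ j, j ≠ j0 → al j = 0 := by
      intro j hj
      by_contra h
      exact hj (huniq j j0 h hj0ne)
    refine ⟨?_, ?_, fun i => Or.inl (hth0 i).1, fun i => Or.inl (hth0 i).2, ?_⟩
    · intro i j
      rcases hbg i j with hb | hg
      · left; exact hb
      · have hv : b i j = -(al j) := by
          have h' := hsal i j
          rw [hsdef, hg] at h'
          linarith
        by_cases hj : j = j0
        · subst hj
          rcases halv with h | h <;> rw [hv, h] <;> norm_num
        · rw [hv, halz j hj]; norm_num
    · intro i j
      rcases hbg i j with hb | hg
      · have hv : g i j = al j := by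
          have h' := hsal i j
          rw [hsdef, hb] at h'
          linarith
        by_cases hj : j = j0
        · subst hj
          rcases halv with h | h <;> rw [hv, h] <;> norm_num
        · rw [hv, halz j hj]; norm_num
      · left; exact hg
    · intro j
      by_cases hj : j = j0
      · subst hj
        rcases halv with h | h <;> rw [h] <;> norm_num
      · left; exact halz j hj
end

section
/- Let w ∈ {0, ±1}^n, a₁,…,a_k ∈ {0,1}, and let P be the polyhedron of points (β¹,γ¹,θ¹,…,β^k,γ^k,θ^k,α₊,α₋) with β^i,γ^i ∈ ℝ^n_{≥0}, θ^i ∈ ℝ²_{≥0}, α₊,α₋ ∈ ℝ^n_{≥0}, satisfying β^i − γ^i + w θ^i_1 − w θ^i_2 + α₊ − α₋ = a_i w for all i ∈ {1,…,k}. Then every extreme point of P has all coordinates in {0,1}. -/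
private lemma pertNonneg (x d ε : ℝ) (hε : 0 < ε) (hx : 0 ≤ x) (h : d ≠ 0 → ε ≤ x / |d|) :
    0 ≤ x + ε * d ∧ 0 ≤ x - ε * d := by
  by_cases hd : d = 0
  · constructor <;> simp [hd, hx]
  · have habs : 0 < |d| := abs_pos.mpr hd
    have h2 : ε * |d| ≤ x := (le_div_iff₀ habs).mp (h hd)
    have h3 : |ε * d| = ε * |d| := by rw [abs_mul, abs_of_pos hε]
    have h4 := neg_abs_le (ε * d)
    have h5 := le_abs_self (ε * d)
    constructor <;> linarith

private lemma pairLemma (x y : ℝ) (hx : 0 ≤ x) (hy : 0 ≤ y) (h0 : x = 0 ∨ y = 0)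
    (htv : x - y = -1 ∨ x - y = 0 ∨ x - y = 1) :
    (x = 0 ∨ x = 1) ∧ (y = 0 ∨ y = 1) := by
  constructor <;> rcases h0 with h | h <;> rcases htv with h2 | h2 | h2 <;>
    first
      | (left; linarith)
      | (right; linarith)

private def adjFn {n k : ℕ} (w : Fin n → ℝ) (bet gam : Fin k → Fin n → ℝ) :
    (Fin k ⊕ Fin n) → (Fin k ⊕ Fin n) → Prop
  | .inl i, .inr j => w j ≠ 0 ∧ bet i j = gam i j
  | .inr j, .inl i => w j ≠ 0 ∧ bet i j = gam i j
  | .inl _, .inl _ => False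
  | .inr _, .inr _ => False

private def grFn {n k : ℕ} (th1 th2 : Fin k → ℝ) (ap am : Fin n → ℝ) :
    (Fin k ⊕ Fin n) → Prop :=
  Sum.elim (fun i => th1 i = th2 i) (fun j => ap j = am j)

private def reachFn {n k : ℕ} (w : Fin n → ℝ) (bet gam : Fin k → Fin n → ℝ)
    (th1 th2 : Fin k → ℝ) (ap am : Fin n → ℝ) (v : Fin k ⊕ Fin n) : Prop :=
  ∃ v', Relation.ReflTransGen (adjFn w bet gam) v v' ∧ grFn th1 th2 ap am v'

/-- every extreme point of the standard-form polyhedron with right-hand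
side aᵢ w has all coordinates in {0,1}. Points are tuples (β, γ, θ₁, θ₂, α₊, α₋). -/
theorem stmt3 (n k : ℕ) (w : Fin n → ℝ) (hw : ∀ j, w j = 0 ∨ w j = 1 ∨ w j = -1)
    (a : Fin k → ℝ) (ha : ∀ i, a i = 0 ∨ a i = 1)
    (P : Set ((Fin k → Fin n → ℝ) × (Fin k → Fin n → ℝ) × (Fin k → ℝ) × (Fin k → ℝ) ×
      (Fin n → ℝ) × (Fin n → ℝ)))
    (hP : ∀ p, p ∈ P ↔
      (∀ i j, p.1 i j - p.2.1 i j + w j * p.2.2.1 i - w j * p.2.2.2.1 i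
          + p.2.2.2.2.1 j - p.2.2.2.2.2 j = a i * w j) ∧
      (∀ i j, 0 ≤ p.1 i j) ∧ (∀ i j, 0 ≤ p.2.1 i j) ∧
      (∀ i, 0 ≤ p.2.2.1 i) ∧ (∀ i, 0 ≤ p.2.2.2.1 i) ∧
      (∀ j, 0 ≤ p.2.2.2.2.1 j) ∧ (∀ j, 0 ≤ p.2.2.2.2.2 j))
    (p : (Fin k → Fin n → ℝ) × (Fin k → Fin n → ℝ) × (Fin k → ℝ) × (Fin k → ℝ) ×
      (Fin n → ℝ) × (Fin n → ℝ))
    (hp : p ∈ Set.extremePoints ℝ P) :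
    (∀ i j, p.1 i j = 0 ∨ p.1 i j = 1) ∧ (∀ i j, p.2.1 i j = 0 ∨ p.2.1 i j = 1) ∧
    (∀ i, p.2.2.1 i = 0 ∨ p.2.2.1 i = 1) ∧ (∀ i, p.2.2.2.1 i = 0 ∨ p.2.2.2.1 i = 1) ∧
    (∀ j, p.2.2.2.2.1 j = 0 ∨ p.2.2.2.2.1 j = 1) ∧
    (∀ j, p.2.2.2.2.2 j = 0 ∨ p.2.2.2.2.2 j = 1) := by
  classical
  obtain ⟨bet, gam, th1, th2, ap, am⟩ := p
  rw [mem_extremePoints] at hp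
  obtain ⟨hpP, hpext⟩ := hp
  obtain ⟨heq, hβ, hγ, hθ₁, hθ₂, hA, hB⟩ := (hP _).mp hpP
  simp only at heq hβ hγ hθ₁ hθ₂ hA hB ⊢
  -- Key extremality tool
  have keyE : ∀ (dβ dγ : Fin k → Fin n → ℝ) (dθ₁ dθ₂ : Fin k → ℝ) (dA dB : Fin n → ℝ),
      (∀ i j, dβ i j - dγ i j + w j * dθ₁ i - w j * dθ₂ i + dA j - dB j = 0) →
      (∀ i j, dβ i j ≠ 0 → 0 < bet i j) → (∀ i j, dγ i j ≠ 0 → 0 < gam i j) →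
      (∀ i, dθ₁ i ≠ 0 → 0 < th1 i) → (∀ i, dθ₂ i ≠ 0 → 0 < th2 i) →
      (∀ j, dA j ≠ 0 → 0 < ap j) → (∀ j, dB j ≠ 0 → 0 < am j) →
      ((∃ i j, dβ i j ≠ 0) ∨ (∃ i j, dγ i j ≠ 0) ∨ (∃ i, dθ₁ i ≠ 0) ∨ (∃ i, dθ₂ i ≠ 0) ∨
        (∃ j, dA j ≠ 0) ∨ (∃ j, dB j ≠ 0)) →
      False := by
    intro dβ dγ dθ₁ dθ₂ dA dB hdeq hsβ hsγ hsθ₁ hsθ₂ hsA hsB hnz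
    set F : Unit ⊕ (Fin k × Fin n) ⊕ (Fin k × Fin n) ⊕ Fin k ⊕ Fin k ⊕ Fin n ⊕ Fin n → ℝ :=
      Sum.elim (fun _ => 1)
        (Sum.elim (fun q => if dβ q.1 q.2 = 0 then 1 else bet q.1 q.2 / |dβ q.1 q.2|)
          (Sum.elim (fun q => if dγ q.1 q.2 = 0 then 1 else gam q.1 q.2 / |dγ q.1 q.2|)
            (Sum.elim (fun i => if dθ₁ i = 0 then 1 else th1 i / |dθ₁ i|)
              (Sum.elim (fun i => if dθ₂ i = 0 then 1 else th2 i / |dθ₂ i|)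
                (Sum.elim (fun j => if dA j = 0 then 1 else ap j / |dA j|)
                  (fun j => if dB j = 0 then 1 else am j / |dB j|)))))) with hF
    have posif : ∀ (q d : ℝ), (d ≠ 0 → 0 < q) → 0 < if d = 0 then 1 else q / |d| := by
      intro q d hq
      split_ifs with h
      · norm_num
      · exact div_pos (hq h) (abs_pos.mpr h)
    have hFpos : ∀ x, 0 < F x := by
      rintro (x | (⟨i, j⟩ | (⟨i, j⟩ | (i | (i | (j | j)))))) <;>
        simp only [hF, Sum.elim_inl, Sum.elim_inr]
      · norm_num
      · exact posif _ _ (hsβ i j)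
      · exact posif _ _ (hsγ i j)
      · exact posif _ _ (hsθ₁ i)
      · exact posif _ _ (hsθ₂ i)
      · exact posif _ _ (hsA j)
      · exact posif _ _ (hsB j)
    have hne : (Finset.univ : Finset (Unit ⊕ (Fin k × Fin n) ⊕ (Fin k × Fin n) ⊕ Fin k ⊕ Fin k ⊕ Fin n ⊕ Fin n)).Nonempty :=
      ⟨Sum.inl (), Finset.mem_univ _⟩
    set ε := Finset.univ.inf' hne F with hεdef
    have hεpos : 0 < ε := (Finset.lt_inf'_iff hne).mpr (fun x _ => hFpos x)
    have hεle : ∀ x, ε ≤ F x := fun x => Finset.inf'_le F (Finset.mem_univ x)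
    have bβ : ∀ i j, 0 ≤ bet i j + ε * dβ i j ∧ 0 ≤ bet i j - ε * dβ i j := fun i j =>
      pertNonneg _ _ _ hεpos (hβ i j) (fun hd => by
        simpa [hF, hd] using hεle (Sum.inr (Sum.inl (i, j))))
    have bγ : ∀ i j, 0 ≤ gam i j + ε * dγ i j ∧ 0 ≤ gam i j - ε * dγ i j := fun i j =>
      pertNonneg _ _ _ hεpos (hγ i j) (fun hd => by
        simpa [hF, hd] using hεle (Sum.inr (Sum.inr (Sum.inl (i, j)))))
    have bθ₁ : ∀ i, 0 ≤ th1 i + ε * dθ₁ i ∧ 0 ≤ th1 i - ε * dθ₁ i := fun i =>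
      pertNonneg _ _ _ hεpos (hθ₁ i) (fun hd => by
        simpa [hF, hd] using hεle (Sum.inr (Sum.inr (Sum.inr (Sum.inl i)))))
    have bθ₂ : ∀ i, 0 ≤ th2 i + ε * dθ₂ i ∧ 0 ≤ th2 i - ε * dθ₂ i := fun i =>
      pertNonneg _ _ _ hεpos (hθ₂ i) (fun hd => by
        simpa [hF, hd] using hεle (Sum.inr (Sum.inr (Sum.inr (Sum.inr (Sum.inl i))))))
    have bA : ∀ j, 0 ≤ ap j + ε * dA j ∧ 0 ≤ ap j - ε * dA j := fun j =>
      pertNonneg _ _ _ hεpos (hA j) (fun hd => by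
        simpa [hF, hd] using hεle (Sum.inr (Sum.inr (Sum.inr (Sum.inr (Sum.inr (Sum.inl j)))))))
    have bB : ∀ j, 0 ≤ am j + ε * dB j ∧ 0 ≤ am j - ε * dB j := fun j =>
      pertNonneg _ _ _ hεpos (hB j) (fun hd => by
        simpa [hF, hd] using hεle (Sum.inr (Sum.inr (Sum.inr (Sum.inr (Sum.inr (Sum.inr j)))))))
    set y : (Fin k → Fin n → ℝ) × (Fin k → Fin n → ℝ) × (Fin k → ℝ) × (Fin k → ℝ) ×
        (Fin n → ℝ) × (Fin n → ℝ) :=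
      (fun i j => bet i j + ε * dβ i j, fun i j => gam i j + ε * dγ i j,
       fun i => th1 i + ε * dθ₁ i, fun i => th2 i + ε * dθ₂ i,
       fun j => ap j + ε * dA j, fun j => am j + ε * dB j) with hy_def
    set z : (Fin k → Fin n → ℝ) × (Fin k → Fin n → ℝ) × (Fin k → ℝ) × (Fin k → ℝ) ×
        (Fin n → ℝ) × (Fin n → ℝ) :=
      (fun i j => bet i j - ε * dβ i j, fun i j => gam i j - ε * dγ i j,
       fun i => th1 i - ε * dθ₁ i, fun i => th2 i - ε * dθ₂ i,
       fun j => ap j - ε * dA j, fun j => am j - ε * dB j) with hz_def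
    have hyP : y ∈ P := (hP y).mpr (by
      refine ⟨fun i j => ?_, fun i j => (bβ i j).1, fun i j => (bγ i j).1,
        fun i => (bθ₁ i).1, fun i => (bθ₂ i).1, fun j => (bA j).1, fun j => (bB j).1⟩
      simp only [hy_def]
      linear_combination heq i j + ε * hdeq i j)
    have hzP : z ∈ P := (hP z).mpr (by
      refine ⟨fun i j => ?_, fun i j => (bβ i j).2, fun i j => (bγ i j).2,
        fun i => (bθ₁ i).2, fun i => (bθ₂ i).2, fun j => (bA j).2, fun j => (bB j).2⟩
      simp only [hz_def]
      linear_combination heq i j - ε * hdeq i j)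
    have hseg : (bet, gam, th1, th2, ap, am) ∈ openSegment ℝ y z := by
      refine ⟨1/2, 1/2, by norm_num, by norm_num, by norm_num, ?_⟩
      simp only [hy_def, hz_def, Prod.smul_mk, Prod.mk_add_mk, Prod.mk.injEq]
      refine ⟨?_, ?_, ?_, ?_, ?_, ?_⟩ <;> funext i <;> try funext j
      all_goals simp only [Pi.add_apply, Pi.smul_apply, smul_eq_mul]; ring
    obtain ⟨hy_eq, -⟩ := hpext y hyP z hzP hseg
    rw [hy_def] at hy_eq
    simp only [Prod.mk.injEq] at hy_eq
    obtain ⟨e1, e2, e3, e4, e5, e6⟩ := hy_eq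
    have zero_of : ∀ q dq : ℝ, q + ε * dq = q → dq = 0 := by
      intro q dq h
      have h' : ε * dq = 0 := by linarith
      rcases mul_eq_zero.mp h' with h'' | h''
      · exact absurd h'' (ne_of_gt hεpos)
      · exact h''
    rcases hnz with ⟨i, j, h⟩ | ⟨i, j, h⟩ | ⟨i, h⟩ | ⟨i, h⟩ | ⟨j, h⟩ | ⟨j, h⟩
    · exact h (zero_of _ _ (congrFun (congrFun e1 i) j))
    · exact h (zero_of _ _ (congrFun (congrFun e2 i) j))
    · exact h (zero_of _ _ (congrFun e3 i))
    · exact h (zero_of _ _ (congrFun e4 i))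
    · exact h (zero_of _ _ (congrFun e5 j))
    · exact h (zero_of _ _ (congrFun e6 j))
  -- Step 1: complementarity of paired variables
  have hβγpair : ∀ i j, bet i j = 0 ∨ gam i j = 0 := by
    intro i j
    by_contra hc
    push_neg at hc
    obtain ⟨h1, h2⟩ := hc
    refine keyE (fun i' j' => if i' = i ∧ j' = j then 1 else 0)
      (fun i' j' => if i' = i ∧ j' = j then 1 else 0) 0 0 0 0
      (fun i' j' => by beta_reduce; split_ifs <;> simp) ?_ ?_ (by simp) (by simp) (by simp) (by simp)
      (Or.inl ⟨i, j, by simp⟩)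
    · intro i' j' hne'
      beta_reduce at hne'
      split_ifs at hne' with h
      · obtain ⟨rfl, rfl⟩ := h
        exact lt_of_le_of_ne (hβ i' j') (Ne.symm h1)
      · exact absurd rfl hne'
    · intro i' j' hne'
      beta_reduce at hne'
      split_ifs at hne' with h
      · obtain ⟨rfl, rfl⟩ := h
        exact lt_of_le_of_ne (hγ i' j') (Ne.symm h2)
      · exact absurd rfl hne'
  have hθpair : ∀ i, th1 i = 0 ∨ th2 i = 0 := by
    intro i
    by_contra hc
    push_neg at hc
    obtain ⟨h1, h2⟩ := hc
    refine keyE 0 0 (fun i' => if i' = i then 1 else 0) (fun i' => if i' = i then 1 else 0) 0 0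
      (fun i' j' => by beta_reduce; split_ifs <;> simp) (by simp) (by simp) ?_ ?_ (by simp) (by simp)
      (Or.inr (Or.inr (Or.inl ⟨i, by simp⟩)))
    · intro i' hne'
      beta_reduce at hne'
      split_ifs at hne' with h
      · subst h
        exact lt_of_le_of_ne (hθ₁ i') (Ne.symm h1)
      · exact absurd rfl hne'
    · intro i' hne'
      beta_reduce at hne'
      split_ifs at hne' with h
      · subst h
        exact lt_of_le_of_ne (hθ₂ i') (Ne.symm h2)
      · exact absurd rfl hne'
  have hABpair : ∀ j, ap j = 0 ∨ am j = 0 := by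
    intro j
    by_contra hc
    push_neg at hc
    obtain ⟨h1, h2⟩ := hc
    refine keyE 0 0 0 0 (fun j' => if j' = j then 1 else 0) (fun j' => if j' = j then 1 else 0)
      (fun i' j' => by beta_reduce; split_ifs <;> simp) (by simp) (by simp) (by simp) (by simp) ?_ ?_
      (Or.inr (Or.inr (Or.inr (Or.inr (Or.inl ⟨j, by simp⟩)))))
    · intro j' hne'
      beta_reduce at hne'
      split_ifs at hne' with h
      · subst h
        exact lt_of_le_of_ne (hA j') (Ne.symm h1)
      · exact absurd rfl hne'
    · intro j' hne'
      beta_reduce at hne'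
      split_ifs at hne' with h
      · subst h
        exact lt_of_le_of_ne (hB j') (Ne.symm h2)
      · exact absurd rfl hne'
  -- Step 2: columns with w j = 0 vanish entirely
  have hw0 : ∀ j, w j = 0 → ap j = 0 ∧ am j = 0 ∧ ∀ i, bet i j = 0 ∧ gam i j = 0 := by
    intro j hwj
    have hap : ap j = 0 := by
      by_contra h1
      have hA0 : 0 < ap j := lt_of_le_of_ne (hA j) (Ne.symm h1)
      have ham : am j = 0 := (hABpair j).resolve_left h1
      have hgam : ∀ i, 0 < gam i j := by
        intro i
        have h2 := heq i j
        rw [hwj, ham] at h2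
        linarith [hβ i j]
      refine keyE 0 (fun i' j' => if j' = j then 1 else 0) 0 0
        (fun j' => if j' = j then 1 else 0) 0
        (fun i' j' => by beta_reduce; split_ifs <;> simp) (by simp) ?_ (by simp) (by simp) ?_ (by simp)
        (Or.inr (Or.inr (Or.inr (Or.inr (Or.inl ⟨j, by simp⟩)))))
      · intro i' j' hne'
        beta_reduce at hne'
        split_ifs at hne' with h
        · subst h
          exact hgam i'
        · exact absurd rfl hne'
      · intro j' hne'
        beta_reduce at hne'
        split_ifs at hne' with h
        · subst h
          exact hA0
        · exact absurd rfl hne'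
    have ham : am j = 0 := by
      by_contra h1
      have hB0 : 0 < am j := lt_of_le_of_ne (hB j) (Ne.symm h1)
      have hbet : ∀ i, 0 < bet i j := by
        intro i
        have h2 := heq i j
        rw [hwj, hap] at h2
        linarith [hγ i j]
      refine keyE (fun i' j' => if j' = j then 1 else 0) 0 0 0 0
        (fun j' => if j' = j then 1 else 0)
        (fun i' j' => by beta_reduce; split_ifs <;> simp) ?_ (by simp) (by simp) (by simp) (by simp) ?_
        (Or.inr (Or.inr (Or.inr (Or.inr (Or.inr ⟨j, by simp⟩)))))
      · intro i' j' hne'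
        beta_reduce at hne'
        split_ifs at hne' with h
        · subst h
          exact hbet i'
        · exact absurd rfl hne'
      · intro j' hne'
        beta_reduce at hne'
        split_ifs at hne' with h
        · subst h
          exact hB0
        · exact absurd rfl hne'
    refine ⟨hap, ham, fun i => ?_⟩
    have h2 := heq i j
    rw [hwj, hap, ham] at h2
    rcases hβγpair i j with h | h
    · exact ⟨h, by linarith⟩
    · exact ⟨by linarith, h⟩
  -- Step 3: connectivity of the support graph to the ground
  have hgr : ∀ v, grFn th1 th2 ap am v → reachFn w bet gam th1 th2 ap am v :=
    fun v h => ⟨v, Relation.ReflTransGen.refl, h⟩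
  have hclose : ∀ x y, adjFn w bet gam x y →
      reachFn w bet gam th1 th2 ap am y → reachFn w bet gam th1 th2 ap am x := by
    rintro x y hxy ⟨v', hp', hg⟩
    exact ⟨v', Relation.ReflTransGen.head hxy hp', hg⟩
  have reachAll : ∀ v, reachFn w bet gam th1 th2 ap am v := by
    by_contra hc
    push_neg at hc
    obtain ⟨v₀, hv₀⟩ := hc
    have hNRrow : ∀ i, ¬reachFn w bet gam th1 th2 ap am (Sum.inl i) → th1 i ≠ th2 i := by
      intro i hR hth
      exact hR (hgr _ (show grFn th1 th2 ap am (Sum.inl i) from hth))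
    have hNRcol : ∀ j, ¬reachFn w bet gam th1 th2 ap am (Sum.inr j) → ap j ≠ am j := by
      intro j hR hth
      exact hR (hgr _ (show grFn th1 th2 ap am (Sum.inr j) from hth))
    have hNRcolw : ∀ j, ¬reachFn w bet gam th1 th2 ap am (Sum.inr j) → w j ≠ 0 := by
      intro j hR hwj
      obtain ⟨h1, h2, -⟩ := hw0 j hwj
      exact hNRcol j hR (h1.trans h2.symm)
    refine keyE
      (fun i j => if reachFn w bet gam th1 th2 ap am (Sum.inl i) then
          (if reachFn w bet gam th1 th2 ap am (Sum.inr j) then 0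
           else if gam i j = 0 then w j else 0)
        else (if reachFn w bet gam th1 th2 ap am (Sum.inr j) then
          (if gam i j = 0 then -w j else 0) else 0))
      (fun i j => if reachFn w bet gam th1 th2 ap am (Sum.inl i) then
          (if reachFn w bet gam th1 th2 ap am (Sum.inr j) then 0
           else if gam i j = 0 then 0 else -w j)
        else (if reachFn w bet gam th1 th2 ap am (Sum.inr j) then
          (if gam i j = 0 then 0 else w j) else 0))
      (fun i => if reachFn w bet gam th1 th2 ap am (Sum.inl i) then 0
        else if th2 i = 0 then 1 else 0)
      (fun i => if reachFn w bet gam th1 th2 ap am (Sum.inl i) then 0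
        else if th2 i = 0 then 0 else -1)
      (fun j => if reachFn w bet gam th1 th2 ap am (Sum.inr j) then 0
        else if am j = 0 then -w j else 0)
      (fun j => if reachFn w bet gam th1 th2 ap am (Sum.inr j) then 0
        else if am j = 0 then 0 else w j)
      ?_ ?_ ?_ ?_ ?_ ?_ ?_ ?_
    · intro i j
      beta_reduce
      by_cases h1 : reachFn w bet gam th1 th2 ap am (Sum.inl i) <;>
        by_cases h2 : reachFn w bet gam th1 th2 ap am (Sum.inr j) <;>
        simp only [h1, h2, if_true, if_false] <;> (try split_ifs) <;> ring
    · intro i j hne'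
      by_cases h1 : reachFn w bet gam th1 th2 ap am (Sum.inl i) <;>
        by_cases h2 : reachFn w bet gam th1 th2 ap am (Sum.inr j) <;>
        simp only [h1, h2, if_true, if_false] at hne'
      · exact absurd rfl hne'
      · by_cases h3 : gam i j = 0
        · rw [if_pos h3] at hne'
          have hwne : w j ≠ 0 := hne'
          have hbne : bet i j ≠ gam i j := by
            intro hbg
            exact h2 (hclose _ _ (show adjFn w bet gam (Sum.inr j) (Sum.inl i) from
              ⟨hwne, hbg⟩) h1)
          rw [h3] at hbne
          exact lt_of_le_of_ne (hβ i j) (Ne.symm hbne)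
        · rw [if_neg h3] at hne'
          exact absurd rfl hne'
      · by_cases h3 : gam i j = 0
        · rw [if_pos h3] at hne'
          have hwne : w j ≠ 0 := fun h => hne' (by rw [h, neg_zero])
          have hbne : bet i j ≠ gam i j := by
            intro hbg
            exact h1 (hclose _ _ (show adjFn w bet gam (Sum.inl i) (Sum.inr j) from
              ⟨hwne, hbg⟩) h2)
          rw [h3] at hbne
          exact lt_of_le_of_ne (hβ i j) (Ne.symm hbne)
        · rw [if_neg h3] at hne'
          exact absurd rfl hne'
      · exact absurd rfl hne'
    · intro i j hne'
      by_cases h3 : gam i j = 0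
      · simp [h3] at hne'
      · exact lt_of_le_of_ne (hγ i j) (Ne.symm h3)
    · intro i hne'
      by_cases h1 : reachFn w bet gam th1 th2 ap am (Sum.inl i)
      · simp [h1] at hne'
      · by_cases h3 : th2 i = 0
        · have hth := hNRrow i h1
          rw [h3] at hth
          exact lt_of_le_of_ne (hθ₁ i) (Ne.symm hth)
        · simp [h1, h3] at hne'
    · intro i hne'
      by_cases h1 : reachFn w bet gam th1 th2 ap am (Sum.inl i)
      · simp [h1] at hne'
      · by_cases h3 : th2 i = 0
        · simp [h1, h3] at hne'
        · exact lt_of_le_of_ne (hθ₂ i) (Ne.symm h3)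
    · intro j hne'
      by_cases h2 : reachFn w bet gam th1 th2 ap am (Sum.inr j)
      · simp [h2] at hne'
      · by_cases h3 : am j = 0
        · have hth := hNRcol j h2
          rw [h3] at hth
          exact lt_of_le_of_ne (hA j) (Ne.symm hth)
        · simp [h2, h3] at hne'
    · intro j hne'
      by_cases h2 : reachFn w bet gam th1 th2 ap am (Sum.inr j)
      · simp [h2] at hne'
      · by_cases h3 : am j = 0
        · simp [h2, h3] at hne'
        · exact lt_of_le_of_ne (hB j) (Ne.symm h3)
    · rcases v₀ with i | j
      · by_cases h3 : th2 i = 0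
        · exact Or.inr (Or.inr (Or.inl ⟨i, by simp [hv₀, h3]⟩))
        · exact Or.inr (Or.inr (Or.inr (Or.inl ⟨i, by simp [hv₀, h3]⟩)))
      · have hwne := hNRcolw j hv₀
        by_cases h3 : am j = 0
        · exact Or.inr (Or.inr (Or.inr (Or.inr (Or.inl ⟨j, by simp [hv₀, h3, hwne]⟩))))
        · exact Or.inr (Or.inr (Or.inr (Or.inr (Or.inr ⟨j, by simp [hv₀, h3, hwne]⟩))))
  -- Step 4: values along paths
  have valeq : ∀ x c, adjFn w bet gam x c →
      Sum.elim (fun i => a i - (th1 i - th2 i)) (fun j => w j * (ap j - am j)) x =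
      Sum.elim (fun i => a i - (th1 i - th2 i)) (fun j => w j * (ap j - am j)) c := by
    rintro (i | j) (i' | j') h
    · exact h.elim
    · obtain ⟨hwj, hbg⟩ := h
      simp only [Sum.elim_inl, Sum.elim_inr]
      have h2 := heq i j'
      rcases hw j' with h3 | h3 | h3
      · exact absurd h3 hwj
      · rw [h3] at h2 ⊢
        linarith
      · rw [h3] at h2 ⊢
        linarith
    · obtain ⟨hwj, hbg⟩ := h
      simp only [Sum.elim_inl, Sum.elim_inr]
      have h2 := heq i' j
      rcases hw j with h3 | h3 | h3
      · exact absurd h3 hwj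
      · rw [h3] at h2 ⊢
        linarith
      · rw [h3] at h2 ⊢
        linarith
    · exact h.elim
  have claimB : ∀ v v', Relation.ReflTransGen (adjFn w bet gam) v v' →
      grFn th1 th2 ap am v' →
      (Sum.elim (fun i => a i - (th1 i - th2 i)) (fun j => w j * (ap j - am j)) v = 0 ∨
       Sum.elim (fun i => a i - (th1 i - th2 i)) (fun j => w j * (ap j - am j)) v = 1) := by
    intro v v' hpath hgv
    induction hpath using Relation.ReflTransGen.head_induction_on with
    | refl =>
      rcases v' with i | j
      · simp only [grFn, Sum.elim_inl] at hgv ⊢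
        rw [hgv]
        simpa using ha i
      · simp only [grFn, Sum.elim_inr] at hgv ⊢
        rw [hgv]
        left
        ring
    | head h' hp' ih =>
      rw [valeq _ _ h']
      exact ih
  have hvalRow : ∀ i, a i - (th1 i - th2 i) = 0 ∨ a i - (th1 i - th2 i) = 1 := by
    intro i
    obtain ⟨v', hpath, hgv⟩ := reachAll (Sum.inl i)
    simpa using claimB _ _ hpath hgv
  have hvalCol : ∀ j, w j * (ap j - am j) = 0 ∨ w j * (ap j - am j) = 1 := by
    intro j
    obtain ⟨v', hpath, hgv⟩ := reachAll (Sum.inr j)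
    simpa using claimB _ _ hpath hgv
  -- Final assembly
  have hθres : ∀ i, (th1 i = 0 ∨ th1 i = 1) ∧ (th2 i = 0 ∨ th2 i = 1) := by
    intro i
    refine pairLemma _ _ (hθ₁ i) (hθ₂ i) (hθpair i) ?_
    rcases ha i with h1 | h1 <;> rcases hvalRow i with h2 | h2 <;>
      first
        | (left; linarith)
        | (right; left; linarith)
        | (right; right; linarith)
  have hαres : ∀ j, (ap j = 0 ∨ ap j = 1) ∧ (am j = 0 ∨ am j = 1) := by
    intro j
    rcases hw j with h3 | h3 | h3
    · obtain ⟨h4, h5, -⟩ := hw0 j h3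
      exact ⟨Or.inl h4, Or.inl h5⟩
    all_goals
      refine pairLemma _ _ (hA j) (hB j) (hABpair j) ?_
      rcases hvalCol j with h2 | h2 <;> rw [h3] at h2 <;>
        first
          | (left; linarith)
          | (right; left; linarith)
          | (right; right; linarith)
  have hβres : ∀ i j, (bet i j = 0 ∨ bet i j = 1) ∧ (gam i j = 0 ∨ gam i j = 1) := by
    intro i j
    rcases hw j with h3 | h3 | h3
    · obtain ⟨-, -, h6⟩ := hw0 j h3
      exact ⟨Or.inl (h6 i).1, Or.inl (h6 i).2⟩
    all_goals
      refine pairLemma _ _ (hβ i j) (hγ i j) (hβγpair i j) ?_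
      have h2 := heq i j
      rw [h3] at h2
      rcases hvalRow i with h4 | h4 <;> rcases hvalCol j with h5 | h5 <;> rw [h3] at h5 <;>
        first
          | (left; linarith)
          | (right; left; linarith)
          | (right; right; linarith)
  exact ⟨fun i j => (hβres i j).1, fun i j => (hβres i j).2, fun i => (hθres i).1,
    fun i => (hθres i).2, fun j => (hαres j).1, fun j => (hαres j).2⟩
end

section
/- Let f : [L, U] → ℝ be a continuous univariate piecewise linear function with k pieces. Then there exist continuous staircase functions f₁, …, f_m on [L, U], with m ≤ k, such that f = f₁ + ⋯ + f_m. -/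
/-- `f` is piecewise linear on `[L,U]` with `k` pieces, with breakpoints `h`,
slopes `a`, intercepts `d`: `f t = a i * t + d i` on `[h i, h (i+1))`, closed at `U`. -/
def PWLWith (f : ℝ → ℝ) (L U : ℝ) (k : ℕ) (h : Fin (k + 1) → ℝ) (a d : Fin k → ℝ) : Prop :=
  StrictMono h ∧ h 0 = L ∧ h (Fin.last k) = U ∧
    (∀ i : Fin k, ∀ t ∈ Set.Ico (h i.castSucc) (h i.succ), f t = a i * t + d i) ∧
    (∀ i : Fin k, i.succ = Fin.last k → f (h i.succ) = a i * h i.succ + d i)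

/-- `f` is piecewise linear on `[L,U]` with `k` pieces. -/
def IsPWL (f : ℝ → ℝ) (L U : ℝ) (k : ℕ) : Prop :=
  ∃ h a d, PWLWith f L U k h a d

/-- `f` is a staircase function on `[L,U]`: piecewise linear with all slopes in `{0,s}`
for a single `s`. -/
def IsStaircase (f : ℝ → ℝ) (L U : ℝ) : Prop :=
  ∃ (k : ℕ) (h : Fin (k + 1) → ℝ) (a d : Fin k → ℝ) (s : ℝ),
    PWLWith f L U k h a d ∧ ∀ i, a i = 0 ∨ a i = s

open Filter Set in
lemma pwl_bp {f : ℝ → ℝ} {L U : ℝ} {k : ℕ} {h : Fin (k+1) → ℝ} {a d : Fin k → ℝ}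
    (hp : PWLWith f L U k h a d) (hcont : ContinuousOn f (Set.Icc L U)) (i : Fin k) :
    f (h i.succ) = a i * h i.succ + d i := by
  obtain ⟨hmono, hL, hU, hpiece, _⟩ := hp
  have hlt : h i.castSucc < h i.succ := hmono (Fin.castSucc_lt_succ (i := i))
  have hbL : L ≤ h i.succ := hL ▸ hmono.monotone (Fin.zero_le _)
  have hbU : h i.succ ≤ U := hU ▸ hmono.monotone (Fin.le_last _)
  have hcw : ContinuousWithinAt f (Set.Ico (h i.castSucc) (h i.succ)) (h i.succ) := by
    apply (hcont (h i.succ) ⟨hbL, hbU⟩).mono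
    intro x hx
    exact ⟨le_trans (hL ▸ hmono.monotone (Fin.zero_le _)) hx.1, le_trans hx.2.le hbU⟩
  have hne : (nhdsWithin (h i.succ) (Set.Ico (h i.castSucc) (h i.succ))).NeBot := by
    rw [nhdsWithin_Ico_eq_nhdsLT hlt]; infer_instance
  have h1 : Tendsto f (nhdsWithin (h i.succ) (Set.Ico (h i.castSucc) (h i.succ))) (nhds (f (h i.succ))) := hcw
  have h2 : Tendsto f (nhdsWithin (h i.succ) (Set.Ico (h i.castSucc) (h i.succ))) (nhds (a i * h i.succ + d i)) := by
    have hg : Tendsto (fun t => a i * t + d i) (nhdsWithin (h i.succ) (Set.Ico (h i.castSucc) (h i.succ))) (nhds (a i * h i.succ + d i)) :=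
      ((continuous_const.mul continuous_id).add continuous_const).continuousWithinAt
    exact hg.congr' (Filter.eventuallyEq_of_mem self_mem_nhdsWithin fun t ht => (hpiece i t ht).symm)
  exact tendsto_nhds_unique h1 h2


/-- a continuous piecewise linear function with `k` pieces on `[L,U]`
is a sum of at most `k` continuous staircase functions. -/
theorem stmt4 (L U : ℝ) (hLU : L < U) (f : ℝ → ℝ) (k : ℕ)
    (hf : IsPWL f L U k) (hcont : ContinuousOn f (Set.Icc L U)) :
    ∃ (m : ℕ), m ≤ k ∧ ∃ F : Fin m → ℝ → ℝ,
      (∀ v, ContinuousOn (F v) (Set.Icc L U) ∧ IsStaircase (F v) L U) ∧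
      ∀ t ∈ Set.Icc L U, f t = ∑ v, F v t := by
  obtain ⟨h, a, d, hp⟩ := hf
  obtain ⟨hmono, hL, hU, hpiece, hlast⟩ := hp
  have hk : 0 < k := by
    rcases Nat.eq_zero_or_pos k with rfl | hk
    · exact absurd (hL ▸ hU ▸ rfl : L = U) (ne_of_lt hLU)
    · exact hk
  -- ℕ-indexed versions
  set H : ℕ → ℝ := fun n => h ⟨min n k, Nat.lt_succ_of_le (min_le_right n k)⟩ with hH
  set A : ℕ → ℝ := fun n => if hn : n < k then a ⟨n, hn⟩ else 0 with hA
  set D : ℕ → ℝ := fun n => if hn : n < k then d ⟨n, hn⟩ else 0 with hD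
  have Hval : ∀ n (hn : n ≤ k), H n = h ⟨n, Nat.lt_succ_of_le hn⟩ := by
    intro n hn
    simp only [hH]
    congr 1
    exact Fin.ext (by simp [min_eq_left hn])
  have HL : H 0 = L := by
    rw [Hval 0 (Nat.zero_le k), ← hL]; exact congrArg h (Fin.ext rfl)
  have HU : H k = U := by
    rw [Hval k le_rfl, ← hU]; exact congrArg h (Fin.ext rfl)
  have Hcast : ∀ i : Fin k, H i.val = h i.castSucc := by
    intro i; rw [Hval i.val (le_of_lt i.isLt)]; exact congrArg h (Fin.ext rfl)
  have Hsucc : ∀ i : Fin k, H (i.val + 1) = h i.succ := by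
    intro i; rw [Hval (i.val + 1) i.isLt]; exact congrArg h (Fin.ext rfl)
  have Hmono : Monotone H := by
    intro m n hmn
    exact hmono.monotone (by simp [Fin.le_def]; omega)
  have Hsm : ∀ m n, m < n → m < k → H m < H n := by
    intro m n hmn hm
    apply hmono
    simp [Fin.lt_def]; omega
  have piece : ∀ n (hn : n < k), ∀ t, H n ≤ t → t < H (n + 1) → f t = A n * t + D n := by
    intro n hn t h1 h2
    have := hpiece ⟨n, hn⟩ t ⟨by rwa [← Hcast ⟨n, hn⟩], by rwa [← Hsucc ⟨n, hn⟩]⟩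
    simpa [hA, hD, hn] using this
  have bpval : ∀ n (hn : n < k), f (H (n + 1)) = A n * H (n + 1) + D n := by
    intro n hn
    have := pwl_bp ⟨hmono, hL, hU, hpiece, hlast⟩ hcont ⟨n, hn⟩
    rw [← Hsucc ⟨n, hn⟩] at this
    simpa [hA, hD, hn] using this
  have leftval : ∀ n (hn : n < k), f (H n) = A n * H n + D n := by
    intro n hn
    exact piece n hn (H n) le_rfl (Hsm n (n + 1) (Nat.lt_succ_self n) hn)
  -- telescoping
  have telescope : ∀ n, n ≤ k → f (H n) = f L + ∑ v ∈ Finset.range n, A v * (H (v + 1) - H v) := by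
    intro n
    induction n with
    | zero => intro _; simp [HL]
    | succ n ih =>
      intro hn
      have hnk : n < k := hn
      have e3 := ih (le_of_lt hnk)
      have e2 := leftval n hnk
      rw [Finset.sum_range_succ, bpval n hnk]
      have e4 : A n * (H (n + 1) - H n) = A n * H (n + 1) - A n * H n := by ring
      rw [e4]
      linarith
  set G : ℕ → ℝ → ℝ := fun n t => A n * (min (max t (H n)) (H (n + 1)) - H n) with hG
  -- sum of G over range k
  have sumG : ∀ i, i < k → ∀ t, H i ≤ t → t ≤ H (i + 1) →
      ∑ n ∈ Finset.range k, G n t =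
        (∑ n ∈ Finset.range i, A n * (H (n + 1) - H n)) + A i * (t - H i) := by
    intro i hi t h1 h2
    have hsplit : ∑ n ∈ Finset.range (i+1), G n t + ∑ n ∈ Finset.Ico (i+1) k, G n t
        = ∑ n ∈ Finset.range k, G n t := by
      rw [Finset.range_eq_Ico, Finset.range_eq_Ico]
      exact Finset.sum_Ico_consecutive (fun n => G n t) (Nat.zero_le _) hi
    rw [← hsplit, Finset.sum_range_succ]
    have e1 : ∀ n ∈ Finset.range i, G n t = A n * (H (n + 1) - H n) := by
      intro n hn
      have hn' : n < i := Finset.mem_range.mp hn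
      have : H (n + 1) ≤ t := le_trans (Hmono (by omega)) h1
      rw [hG]
      simp only
      rw [max_eq_left (le_trans (Hmono (Nat.le_succ n)) this), min_eq_right this]
    have e2 : G i t = A i * (t - H i) := by
      rw [hG]; simp only
      rw [max_eq_left h1, min_eq_left h2]
    have e3 : ∀ n ∈ Finset.Ico (i+1) k, G n t = 0 := by
      intro n hn
      obtain ⟨hn1, hn2⟩ := Finset.mem_Ico.mp hn
      have ht : t ≤ H n := le_trans h2 (Hmono hn1)
      rw [hG]; simp only
      rw [max_eq_right ht, min_eq_left (Hmono (Nat.le_succ n))]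
      ring
    rw [Finset.sum_congr rfl e1, e2, Finset.sum_eq_zero e3, add_zero]
  -- main pointwise identity
  have main : ∀ t ∈ Set.Icc L U, f t = f L + ∑ n ∈ Finset.range k, G n t := by
    intro t ⟨htL, htU⟩
    have key : ∃ i, i < k ∧ H i ≤ t ∧ t ≤ H (i + 1) ∧ f t = A i * t + D i := by
      rcases eq_or_lt_of_le htU with rfl | htU'
      · refine ⟨k - 1, by omega, ?_, ?_, ?_⟩
        · rw [← HU]; exact Hmono (by omega)
        · rw [show k - 1 + 1 = k by omega, HU]
        · have := bpval (k - 1) (by omega)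
          rwa [show k - 1 + 1 = k by omega, HU] at this
      · set P : ℕ → Prop := fun n => H n ≤ t with hP
        have hdec : DecidablePred P := fun n => Real.decidableLE _ _
        set i := Nat.findGreatest P (k - 1) with hi
        have hPi : P i := Nat.findGreatest_spec (Nat.zero_le _) (by rw [hP]; simpa [HL] using htL)
        have hik : i < k := lt_of_le_of_lt (Nat.findGreatest_le _) (by omega)
        have hup : t < H (i + 1) := by
          by_cases hcase : i + 1 ≤ k - 1
          · exact lt_of_not_ge (fun hle =>
              (Nat.findGreatest_is_greatest (Nat.lt_succ_self i) hcase) hle)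
          · have : i + 1 = k := by
              have := Nat.findGreatest_le (P := P) (k - 1)
              omega
            rw [this, HU]; exact htU'
        exact ⟨i, hik, hPi, le_of_lt hup, piece i hik t hPi hup⟩
    obtain ⟨i, hik, ht1, ht2, hft⟩ := key
    rw [sumG i hik t ht1 ht2, hft]
    have := telescope i (le_of_lt hik)
    rw [leftval i hik] at this
    linarith [this]
  -- the decomposition
  refine ⟨k, le_rfl, fun v t => G v.val t + (if v.val = 0 then f L else 0), ?_, ?_⟩
  · intro v
    constructor
    · apply Continuous.continuousOn
      rw [hG]
      exact (continuous_const.mul (((continuous_id.max continuous_const).min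
        continuous_const).sub continuous_const)).add continuous_const
    · -- staircase
      set e : ℝ := if v.val = 0 then f L else 0 with he
      have Av : A v.val = a v := by simp [hA, v.isLt]
      have claim : ∀ i : Fin k, ∀ t ∈ Set.Icc (h i.castSucc) (h i.succ),
          G v.val t + e = (if i = v then a v else 0) * t +
            (if i.val < v.val then e else if i = v then e - a v * h v.castSucc
              else e + a v * (h v.succ - h v.castSucc)) := by
        intro i t ⟨ht1, ht2⟩
        rw [hG]
        simp only [Hcast v, Hsucc v, Av]
        rcases lt_trichotomy i.val v.val with hc | hc | hc
        · have hne : i ≠ v := fun hh => by rw [hh] at hc; exact lt_irrefl _ hc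
          have hts : t ≤ h v.castSucc := le_trans ht2 (hmono.monotone
            (by simp only [Fin.le_def, Fin.val_succ, Fin.coe_castSucc]; omega))
          rw [if_neg hne, if_pos hc, max_eq_right hts,
            min_eq_left (le_of_lt (hmono (Fin.castSucc_lt_succ (i := v))))]
          ring
        · have hiv : i = v := Fin.ext hc
          subst hiv
          rw [if_pos rfl, if_neg (lt_irrefl _), if_pos rfl,
            max_eq_left ht1, min_eq_left ht2]
          ring
        · have hne : i ≠ v := fun hh => by rw [hh] at hc; exact lt_irrefl _ hc
          have hts : h v.succ ≤ t := le_trans (hmono.monotone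
            (by simp only [Fin.le_def, Fin.val_succ, Fin.coe_castSucc]; omega)) ht1
          rw [if_neg hne, if_neg (by omega), if_neg hne,
            max_eq_left (le_trans (le_of_lt (hmono (Fin.castSucc_lt_succ (i := v)))) hts),
            min_eq_right hts]
          ring
      refine ⟨k, h, (fun i => if i = v then a v else 0),
        (fun i => if i.val < v.val then e else if i = v then e - a v * h v.castSucc
          else e + a v * (h v.succ - h v.castSucc)), a v, ⟨hmono, hL, hU, ?_, ?_⟩, ?_⟩
      · intro i t ht
        exact claim i t ⟨ht.1, le_of_lt ht.2⟩
      · intro i _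
        exact claim i (h i.succ) ⟨le_of_lt (hmono (Fin.castSucc_lt_succ (i := i))), le_rfl⟩
      · intro i
        by_cases hiv : i = v <;> simp [hiv]
  · intro t ht
    rw [main t ht]
    rw [Fin.sum_univ_eq_sum_range (fun n => G n t + (if n = 0 then f L else 0)) k]
    rw [Finset.sum_add_distrib]
    have : ∑ n ∈ Finset.range k, (if n = 0 then f L else 0) = f L := by
      rw [Finset.sum_ite_eq' (Finset.range k) 0 (fun _ => f L)]
      simp [hk]
    rw [this]; ring
end

section
/- Let f : [L, U] → ℝ be a (possibly discontinuous) univariate piecewise linear function with k pieces. Then there exist continuous staircase functions f₁, …, f_m on [L, U] (m ≤ k) and a piecewise constant function f₀ on [L, U] such that f = f₀ + f₁ + ⋯ + f_m. -/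
/-- `f` is a piecewise constant function on `[L,U]`: piecewise linear with all slopes 0. -/
def IsPiecewiseConstant (f : ℝ → ℝ) (L U : ℝ) : Prop :=
  ∃ (k : ℕ) (h : Fin (k + 1) → ℝ) (a d : Fin k → ℝ),
    PWLWith f L U k h a d ∧ ∀ i, a i = 0

/-- a (possibly discontinuous) piecewise linear function with `k` pieces
on `[L,U]` is a sum of at most `k` continuous staircase functions plus one piecewise
constant function. -/
theorem stmt5 (L U : ℝ) (hLU : L < U) (f : ℝ → ℝ) (k : ℕ) (hf : IsPWL f L U k) :
    ∃ (m : ℕ), m ≤ k ∧ ∃ (f₀ : ℝ → ℝ) (F : Fin m → ℝ → ℝ),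
      IsPiecewiseConstant f₀ L U ∧
      (∀ v, ContinuousOn (F v) (Set.Icc L U) ∧ IsStaircase (F v) L U) ∧
      ∀ t ∈ Set.Icc L U, f t = f₀ t + ∑ v, F v t := by
  classical
  obtain ⟨h, a, d, hmono, h0, hlast, hpiece, hend⟩ := hf
  set g : Fin k → ℝ → ℝ :=
    fun v t => a v * (max (min t (h v.succ)) (h v.castSucc) - h v.castSucc) with hgdef
  have hcs : ∀ v : Fin k, h v.castSucc < h v.succ := fun v => hmono (Fin.castSucc_lt_succ : v.castSucc < v.succ)
  have hdiff : ∀ j : Fin k, ∀ t, h j.castSucc ≤ t → t ≤ h j.succ →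
      ∀ v : Fin k, v ≠ j → g v t = g v (h j.castSucc) := by
    intro j t ht1 ht2 v hvj
    rcases lt_or_gt_of_ne hvj with hlt | hgt
    · have hle : h v.succ ≤ h j.castSucc := hmono.monotone (by
        simp only [Fin.le_def, Fin.lt_def] at *
        simp only [Fin.val_succ, Fin.coe_castSucc] at *
        omega)
      simp only [hgdef]
      rw [min_eq_right (hle.trans ht1), min_eq_right hle]
    · have hle : h j.succ ≤ h v.castSucc := hmono.monotone (by
        simp only [Fin.le_def, Fin.lt_def] at *
        simp only [Fin.val_succ, Fin.coe_castSucc] at *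
        omega)
      have hjc : h j.castSucc ≤ h v.castSucc := (ht1.trans ht2).trans hle
      simp only [hgdef]
      rw [min_eq_left (ht2.trans (hle.trans (hcs v).le)),
          min_eq_left (hjc.trans (hcs v).le),
          max_eq_right (ht2.trans hle), max_eq_right hjc]
  have hsum : ∀ j : Fin k, ∀ t, h j.castSucc ≤ t → t ≤ h j.succ →
      ∑ v, g v t = (∑ v, g v (h j.castSucc)) + a j * (t - h j.castSucc) := by
    intro j t ht1 ht2
    have key : ∑ v, (g v t - g v (h j.castSucc)) = a j * (t - h j.castSucc) := by
      rw [Finset.sum_eq_single j]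
      · simp only [hgdef]
        rw [min_eq_left ht2, max_eq_left ht1, min_eq_left (hcs j).le, max_self]
        ring
      · intro v _ hv
        rw [hdiff j t ht1 ht2 v hv]; ring
      · intro hj; exact absurd (Finset.mem_univ j) hj
    have hd := Finset.sum_sub_distrib (f := fun v => g v t) (g := fun v => g v (h j.castSucc))
      (s := Finset.univ)
    rw [hd] at key
    linarith
  refine ⟨k, le_refl k, fun t => f t - ∑ v, g v t, g, ?_, ?_, ?_⟩
  · refine ⟨k, h, fun _ => 0,
      fun j => f (h j.castSucc) - ∑ v, g v (h j.castSucc),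
      ⟨hmono, h0, hlast, ?_, ?_⟩, fun _ => rfl⟩
    · intro j t ht
      obtain ⟨ht1, ht2⟩ := ht
      have hf1 : f t = a j * t + d j := hpiece j t ⟨ht1, ht2⟩
      have hf2 : f (h j.castSucc) = a j * h j.castSucc + d j :=
        hpiece j (h j.castSucc) ⟨le_refl _, hcs j⟩
      have hs := hsum j t ht1 ht2.le
      simp only []
      rw [hf1, hf2, hs]; ring
    · intro j hj
      have hf1 : f (h j.succ) = a j * h j.succ + d j := hend j hj
      have hf2 : f (h j.castSucc) = a j * h j.castSucc + d j :=
        hpiece j (h j.castSucc) ⟨le_refl _, hcs j⟩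
      have hs := hsum j (h j.succ) (hcs j).le (le_refl _)
      simp only []
      rw [hf1, hf2, hs]; ring
  · intro v
    constructor
    · apply Continuous.continuousOn
      fun_prop
    · refine ⟨k, h, fun i => if i = v then a v else 0,
        fun i => if i = v then -(a v * h v.castSucc)
          else if i < v then 0 else a v * (h v.succ - h v.castSucc),
        a v, ⟨hmono, h0, hlast, ?_, ?_⟩, ?_⟩
      · intro i t ht
        obtain ⟨ht1, ht2⟩ := ht
        rcases eq_or_ne i v with rfl | hiv
        · simp only [hgdef, if_pos rfl, eq_self_iff_true, if_true]
          rw [min_eq_left ht2.le, max_eq_left ht1]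
          ring
        · simp only [if_neg hiv]
          rcases lt_or_gt_of_ne hiv with hlt | hgt
          · have hle : h i.succ ≤ h v.castSucc := hmono.monotone (by
              simp only [Fin.le_def, Fin.lt_def] at *
              simp only [Fin.val_succ, Fin.coe_castSucc] at *
              omega)
            rw [if_pos hlt]
            simp only [hgdef]
            have htv : t ≤ h v.castSucc := ht2.le.trans hle
            rw [min_eq_left (htv.trans (hcs v).le), max_eq_right htv]
            ring
          · have hle : h v.succ ≤ h i.castSucc := hmono.monotone (by
              simp only [Fin.le_def, Fin.lt_def] at *
              simp only [Fin.val_succ, Fin.coe_castSucc] at *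
              omega)
            rw [if_neg (not_lt.mpr hgt.le)]
            simp only [hgdef]
            rw [min_eq_right (hle.trans ht1), max_eq_left (hcs v).le]
            ring
      · intro i hi
        have hvU : h v.succ ≤ h i.succ := hmono.monotone (by
          rw [hi]; exact Fin.le_last _)
        have hgU : g v (h i.succ) = a v * (h v.succ - h v.castSucc) := by
          simp only [hgdef]
          rw [min_eq_right hvU, max_eq_left (hcs v).le]
        rcases eq_or_ne i v with rfl | hiv
        · rw [hgU]
          simp only [if_pos rfl, eq_self_iff_true, if_true]
          ring
        · rw [hgU]
          have hvi : v < i := by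
            have h1 : (i : ℕ) + 1 = k := congrArg Fin.val hi
            have h2 : (v : ℕ) < k := v.isLt
            have h3 : (v : ℕ) ≠ (i : ℕ) := fun hc => hiv (Fin.ext hc.symm)
            simp only [Fin.lt_def]; omega
          simp only [if_neg hiv, if_neg (not_lt.mpr hvi.le)]
          ring
      · intro i
        rcases eq_or_ne i v with rfl | hiv
        · right; simp
        · left; simp [if_neg hiv]
  · intro t _
    simp only []
    ring
end

section
/- Let D ⊂ ℝ^n be a compact box, g : D → ℝ piecewise affine with pieces D¹,…,D^k, and C(g) the convex hull of the Cayley embedding of g. For every α ∈ ℝ^n, the inequality y ≤ α·x + ∑_{i=1}^k (max_{x^i ∈ D^i} (c_i − α)·x^i + d̄_i) z_i, where g(x) = c_i·x + d̄_i on D^i, is valid for C(g). Moreover, a point (x̂, ŷ, ẑ) ∈ D × ℝ × Δ^k with ẑ in the simplex satisfies ŷ ≤ min_α [α·x̂ + ∑_i (max_{x^i ∈ D^i}(c_i − α)·x^i + d̄_i) ẑ_i] together with the symmetric lower-bound family if and only if (x̂, ŷ, ẑ) ∈ C(g). -/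
open Set

lemma aux_image_convex {E : Type*} [NormedAddCommGroup E] [NormedSpace ℝ E] {k : ℕ}
    (A : Fin k → Set E) (hconv : ∀ i, Convex ℝ (A i)) :
    Convex ℝ ((fun q : (Fin k → ℝ) × (Fin k → E) => ∑ i, q.1 i • q.2 i) ''
      (stdSimplex ℝ (Fin k) ×ˢ Set.univ.pi A)) := by
  classical
  rintro _ ⟨⟨w, v⟩, ⟨hw, hv⟩, rfl⟩ _ ⟨⟨w', v'⟩, ⟨hw', hv'⟩, rfl⟩ a b ha hb hab
  set W : Fin k → ℝ := fun i => a * w i + b * w' i with hW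
  have hWnn : ∀ i, 0 ≤ W i := fun i =>
    add_nonneg (mul_nonneg ha (hw.1 i)) (mul_nonneg hb (hw'.1 i))
  refine ⟨(W, fun i => if h : W i = 0 then v i else
      (W i)⁻¹ • ((a * w i) • v i + (b * w' i) • v' i)), ⟨⟨hWnn, ?_⟩, ?_⟩, ?_⟩
  · show ∑ i, (a * w i + b * w' i) = 1
    rw [Finset.sum_add_distrib, ← Finset.mul_sum, ← Finset.mul_sum, hw.2, hw'.2]
    linarith
  · intro i _
    dsimp only
    split_ifs with h
    · exact hv i (mem_univ i)
    · have h1 : ((W i)⁻¹ * (a * w i)) • v i + ((W i)⁻¹ * (b * w' i)) • v' i ∈ A i := by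
        refine hconv i (hv i (mem_univ i)) (hv' i (mem_univ i))
          (mul_nonneg (inv_nonneg.2 (hWnn i)) (mul_nonneg ha (hw.1 i)))
          (mul_nonneg (inv_nonneg.2 (hWnn i)) (mul_nonneg hb (hw'.1 i))) ?_
        rw [← mul_add]
        exact inv_mul_cancel₀ h
      simpa [smul_add, smul_smul] using h1
  · show ∑ i, W i • _ = _
    rw [Finset.smul_sum, Finset.smul_sum, ← Finset.sum_add_distrib]
    refine Finset.sum_congr rfl fun i _ => ?_
    dsimp only
    split_ifs with h
    · have h1 : a * w i = 0 := le_antisymm (by have := hWnn i; have := mul_nonneg hb (hw'.1 i); dsimp [W] at h; linarith [mul_nonneg ha (hw.1 i)]) (mul_nonneg ha (hw.1 i))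
      have h2 : b * w' i = 0 := by dsimp [W] at h; linarith
      rw [h, zero_smul, smul_smul, smul_smul, h1, h2, zero_smul, zero_smul, zero_add]
    · rw [smul_smul, mul_inv_cancel₀ h, one_smul, smul_smul, smul_smul]

lemma aux_hull_eq_image {E : Type*} [NormedAddCommGroup E] [NormedSpace ℝ E] {k : ℕ}
    (A : Fin k → Set E) (hconv : ∀ i, Convex ℝ (A i)) (hne : ∀ i, (A i).Nonempty) :
    convexHull ℝ (⋃ i, A i) =
      (fun q : (Fin k → ℝ) × (Fin k → E) => ∑ i, q.1 i • q.2 i) ''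
        (stdSimplex ℝ (Fin k) ×ˢ Set.univ.pi A) := by
  classical
  apply Subset.antisymm
  · apply convexHull_min ?_ (aux_image_convex A hconv)
    rintro x hx
    rw [mem_iUnion] at hx
    obtain ⟨i, hxi⟩ := hx
    choose v0 hv0 using hne
    refine ⟨(fun i' => if i' = i then 1 else 0, Function.update v0 i x), ⟨⟨?_, ?_⟩, ?_⟩, ?_⟩
    · intro j
      dsimp only
      split <;> norm_num
    · simp
    · intro i' _
      rcases eq_or_ne i' i with rfl | h
      · simpa using hxi
      · simpa [Function.update_of_ne h] using hv0 i'
    · simp [ite_smul]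
  · rintro _ ⟨⟨w, v⟩, ⟨hw, hv⟩, rfl⟩
    exact (convex_convexHull ℝ _).sum_mem (fun i _ => hw.1 i) hw.2
      (fun i _ => subset_convexHull ℝ _ (mem_iUnion.2 ⟨i, hv i (mem_univ i)⟩))

lemma aux_hull_compact {E : Type*} [NormedAddCommGroup E] [NormedSpace ℝ E] {k : ℕ}
    (A : Fin k → Set E) (hconv : ∀ i, Convex ℝ (A i)) (hcomp : ∀ i, IsCompact (A i))
    (hne : ∀ i, (A i).Nonempty) : IsCompact (convexHull ℝ (⋃ i, A i)) := by
  rw [aux_hull_eq_image A hconv hne]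
  refine (((isCompact_stdSimplex _ _).prod (isCompact_univ_pi hcomp)).image ?_)
  exact continuous_finset_sum _ fun i _ =>
    ((continuous_apply i).comp continuous_fst).smul ((continuous_apply i).comp continuous_snd)

lemma aux_clm_decomp {n k : ℕ} (f : ((Fin n → ℝ) × ℝ × (Fin k → ℝ)) →L[ℝ] ℝ)
    (p : (Fin n → ℝ) × ℝ × (Fin k → ℝ)) :
    f p = (∑ j, f (Pi.single j 1, 0, 0) * p.1 j) + f (0, 1, 0) * p.2.1
      + ∑ i, f (0, 0, Pi.single i 1) * p.2.2 i := by
  classical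
  have hp : p = (∑ j, p.1 j • ((Pi.single j 1 : Fin n → ℝ), (0:ℝ), (0 : Fin k → ℝ)))
      + p.2.1 • ((0 : Fin n → ℝ), (1:ℝ), (0 : Fin k → ℝ))
      + ∑ i, p.2.2 i • ((0 : Fin n → ℝ), (0:ℝ), (Pi.single i 1 : Fin k → ℝ)) := by
    refine Prod.ext ?_ (Prod.ext ?_ ?_)
    · simp [Prod.fst_sum]
      funext x
      simp [Finset.sum_apply, Pi.single_apply]
    · simp [Prod.snd_sum, Prod.fst_sum]
    · simp [Prod.snd_sum]
      funext x
      simp [Finset.sum_apply, Pi.single_apply]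
  conv_lhs => rw [hp]
  rw [map_add, map_add, map_sum, map_sum, map_smul]
  simp only [map_smul, smul_eq_mul]
  congr 1
  · congr 1
    · exact Finset.sum_congr rfl fun j _ => mul_comm _ _
    · exact mul_comm _ _
  · exact Finset.sum_congr rfl fun i _ => mul_comm _ _

lemma aux_lin {n k : ℕ} (α : Fin n → ℝ) (M : Fin k → ℝ) :
    IsLinearMap ℝ (fun q : (Fin n → ℝ) × ℝ × (Fin k → ℝ) =>
      q.2.1 - ((∑ j, α j * q.1 j) + ∑ i, M i * q.2.2 i)) := by
  constructor
  · intro q r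
    simp only [Prod.fst_add, Prod.snd_add, Pi.add_apply, mul_add, Finset.sum_add_distrib]
    ring
  · intro s q
    simp only [Prod.smul_fst, Prod.smul_snd, Pi.smul_apply, smul_eq_mul]
    have e1 : ∑ j, α j * (s * q.1 j) = s * ∑ j, α j * q.1 j := by
      rw [Finset.mul_sum]; exact Finset.sum_congr rfl fun j _ => by ring
    have e2 : ∑ i, M i * (s * q.2.2 i) = s * ∑ i, M i * q.2.2 i := by
      rw [Finset.mul_sum]; exact Finset.sum_congr rfl fun i _ => by ring
    rw [e1, e2]; ring

/-- validity and sufficiency of the Cayley-embedding inequality families.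
For every α the upper inequality is valid for C(g); and a point of D × ℝ × Δ^k lies in
C(g) iff it satisfies the upper family for every α and the symmetric lower family. -/
theorem stmt12 (n k : ℕ) (l u : Fin n → ℝ) (hlu : l ≤ u)
    (D : Fin k → Set (Fin n → ℝ))
    (hDsub : ∀ i, D i ⊆ Set.Icc l u) (hDcover : (⋃ i, D i) = Set.Icc l u)
    (hDconv : ∀ i, Convex ℝ (D i)) (hDne : ∀ i, (D i).Nonempty)
    (hDcomp : ∀ i, IsCompact (D i))
    (g : (Fin n → ℝ) → ℝ) (c : Fin k → Fin n → ℝ) (d : Fin k → ℝ)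
    (hg : ∀ i, ∀ x ∈ D i, g x = (∑ j, c i j * x j) + d i)
    (Cg : Set ((Fin n → ℝ) × ℝ × (Fin k → ℝ)))
    (hCg : Cg = convexHull ℝ (⋃ i : Fin k,
      (fun x => (x, g x, fun i' => if i' = i then (1:ℝ) else 0)) '' D i))
    (upper lower : (Fin n → ℝ) → (Fin n → ℝ) → (Fin k → ℝ) → ℝ)
    (hupper : ∀ α x z, upper α x z = (∑ j, α j * x j) +
      ∑ i, (sSup ((fun x' => ∑ j, (c i j - α j) * x' j) '' D i) + d i) * z i)
    (hlower : ∀ α x z, lower α x z = (∑ j, α j * x j) +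
      ∑ i, (sInf ((fun x' => ∑ j, (c i j - α j) * x' j) '' D i) + d i) * z i) :
    (∀ α : Fin n → ℝ, ∀ p ∈ Cg, p.2.1 ≤ upper α p.1 p.2.2) ∧
    (∀ p : (Fin n → ℝ) × ℝ × (Fin k → ℝ),
      p.1 ∈ Set.Icc l u → (∀ i, 0 ≤ p.2.2 i) → (∑ i, p.2.2 i) = 1 →
      (((∀ α, p.2.1 ≤ upper α p.1 p.2.2) ∧ (∀ α, lower α p.1 p.2.2 ≤ p.2.1)) ↔
        p ∈ Cg)) := by
  classical
  have hcont : ∀ (β : Fin n → ℝ), Continuous fun x' : Fin n → ℝ => ∑ j, β j * x' j :=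
    fun β => continuous_finset_sum _ fun j _ => (continuous_const.mul (continuous_apply j))
  have hbddA : ∀ (i : Fin k) (α : Fin n → ℝ),
      BddAbove ((fun x' => ∑ j, (c i j - α j) * x' j) '' D i) :=
    fun i α => ((hDcomp i).image (hcont _)).bddAbove
  have hbddB : ∀ (i : Fin k) (α : Fin n → ℝ),
      BddBelow ((fun x' => ∑ j, (c i j - α j) * x' j) '' D i) :=
    fun i α => ((hDcomp i).image (hcont _)).bddBelow
  have hImne : ∀ (i : Fin k) (α : Fin n → ℝ),
      ((fun x' => ∑ j, (c i j - α j) * x' j) '' D i).Nonempty :=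
    fun i α => (hDne i).image _
  have hei : ∀ (F : Fin k → ℝ) (i : Fin k),
      ∑ i', F i' * (if i' = i then (1:ℝ) else 0) = F i := by
    intro F i
    rw [Finset.sum_eq_single i] <;> simp +contextual
  have hsplit : ∀ (i : Fin k) (α : Fin n → ℝ) (x : Fin n → ℝ),
      (∑ j, c i j * x j) = (∑ j, α j * x j) + ∑ j, (c i j - α j) * x j := by
    intro i α x
    rw [← Finset.sum_add_distrib]
    exact Finset.sum_congr rfl fun j _ => by ring
  -- validity of the upper family
  have hvalidU : ∀ α : Fin n → ℝ, ∀ p ∈ Cg, p.2.1 ≤ upper α p.1 p.2.2 := by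
    intro α p hp
    set M : Fin k → ℝ :=
      fun i => sSup ((fun x' => ∑ j, (c i j - α j) * x' j) '' D i) + d i with hM
    have hcvx : Convex ℝ {q : (Fin n → ℝ) × ℝ × (Fin k → ℝ) |
        q.2.1 ≤ (∑ j, α j * q.1 j) + ∑ i, M i * q.2.2 i} := by
      have h1 := convex_halfSpace_le (aux_lin α M) (0:ℝ)
      simpa only [sub_nonpos] using h1
    have hsub : (⋃ i : Fin k,
        (fun x => (x, g x, fun i' => if i' = i then (1:ℝ) else 0)) '' D i) ⊆
        {q : (Fin n → ℝ) × ℝ × (Fin k → ℝ) |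
          q.2.1 ≤ (∑ j, α j * q.1 j) + ∑ i, M i * q.2.2 i} := by
      rintro q hq
      rw [mem_iUnion] at hq
      obtain ⟨i, x, hx, rfl⟩ := hq
      show g x ≤ (∑ j, α j * x j) + ∑ i', M i' * (if i' = i then (1:ℝ) else 0)
      rw [hei M i, hg i x hx, hsplit i α x]
      have h2 : ∑ j, (c i j - α j) * x j ≤
          sSup ((fun x' => ∑ j, (c i j - α j) * x' j) '' D i) :=
        le_csSup (hbddA i α) ⟨x, hx, rfl⟩
      simp only [hM]
      linarith
    have h3 := convexHull_min hsub hcvx (hCg ▸ hp)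
    rw [hupper]
    exact h3
  -- validity of the lower family
  have hvalidL : ∀ α : Fin n → ℝ, ∀ p ∈ Cg, lower α p.1 p.2.2 ≤ p.2.1 := by
    intro α p hp
    set M : Fin k → ℝ :=
      fun i => sInf ((fun x' => ∑ j, (c i j - α j) * x' j) '' D i) + d i with hM
    have hcvx : Convex ℝ {q : (Fin n → ℝ) × ℝ × (Fin k → ℝ) |
        (∑ j, α j * q.1 j) + ∑ i, M i * q.2.2 i ≤ q.2.1} := by
      have h1 := convex_halfSpace_ge (aux_lin α M) (0:ℝ)
      simpa only [sub_nonneg] using h1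
    have hsub : (⋃ i : Fin k,
        (fun x => (x, g x, fun i' => if i' = i then (1:ℝ) else 0)) '' D i) ⊆
        {q : (Fin n → ℝ) × ℝ × (Fin k → ℝ) |
          (∑ j, α j * q.1 j) + ∑ i, M i * q.2.2 i ≤ q.2.1} := by
      rintro q hq
      rw [mem_iUnion] at hq
      obtain ⟨i, x, hx, rfl⟩ := hq
      show (∑ j, α j * x j) + ∑ i', M i' * (if i' = i then (1:ℝ) else 0) ≤ g x
      rw [hei M i, hg i x hx, hsplit i α x]
      have h2 : sInf ((fun x' => ∑ j, (c i j - α j) * x' j) '' D i) ≤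
          ∑ j, (c i j - α j) * x j :=
        csInf_le (hbddB i α) ⟨x, hx, rfl⟩
      simp only [hM]
      linarith
    have h3 := convexHull_min hsub hcvx (hCg ▸ hp)
    rw [hlower]
    exact h3
  refine ⟨hvalidU, ?_⟩
  rintro ⟨xh, yh, zh⟩ hpD hz0 hz1
  dsimp only at hz0 hz1 ⊢
  constructor
  · rintro ⟨hupp, hlow⟩
    by_contra hpC
    -- the pieces of the Cayley embedding are convex, compact, nonempty
    have hAeq : ∀ i : Fin k,
        (fun x => (x, g x, fun i' => if i' = i then (1:ℝ) else 0)) '' D i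
        = (fun x => (x, (∑ j, c i j * x j) + d i,
            fun i' => if i' = i then (1:ℝ) else 0)) '' D i :=
      fun i => Set.image_congr fun x hx => by rw [hg i x hx]
    have hAconv : ∀ i, Convex ℝ
        ((fun x => (x, g x, fun i' => if i' = i then (1:ℝ) else 0)) '' D i) := by
      intro i
      rw [hAeq i]
      rintro _ ⟨x, hx, rfl⟩ _ ⟨x', hx', rfl⟩ a b ha hb hab
      refine ⟨a • x + b • x', hDconv i hx hx' ha hb hab, ?_⟩
      refine Prod.ext rfl (Prod.ext ?_ ?_)
      · show (∑ j, c i j * (a • x + b • x') j) + d i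
          = a * ((∑ j, c i j * x j) + d i) + b * ((∑ j, c i j * x' j) + d i)
        have e : ∑ j, c i j * (a * x j + b * x' j)
            = a * (∑ j, c i j * x j) + b * (∑ j, c i j * x' j) := by
          rw [Finset.mul_sum, Finset.mul_sum, ← Finset.sum_add_distrib]
          exact Finset.sum_congr rfl fun j _ => by ring
        simp only [Pi.add_apply, Pi.smul_apply, smul_eq_mul]
        rw [e]
        linear_combination (-(d i)) * hab
      · funext i'
        show (if i' = i then (1:ℝ) else 0)
          = a * (if i' = i then (1:ℝ) else 0) + b * (if i' = i then (1:ℝ) else 0)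
        split_ifs <;> simp [hab] <;> linarith
    have hAcomp : ∀ i, IsCompact
        ((fun x => (x, g x, fun i' => if i' = i then (1:ℝ) else 0)) '' D i) := by
      intro i
      rw [hAeq i]
      exact (hDcomp i).image
        (continuous_id.prodMk (((hcont (c i)).add continuous_const).prodMk
          continuous_const))
    have hAne : ∀ i,
        ((fun x => (x, g x, fun i' => if i' = i then (1:ℝ) else 0)) '' D i).Nonempty :=
      fun i => (hDne i).image _
    have hclosed : IsClosed Cg := by
      rw [hCg]
      exact (aux_hull_compact _ hAconv hAcomp hAne).isClosed
    have hcvxCg : Convex ℝ Cg := hCg ▸ convex_convexHull ℝ _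
    obtain ⟨f, u0, hfS, hfp⟩ := geometric_hahn_banach_closed_point hcvxCg hclosed hpC
    set a : Fin n → ℝ := fun j => f (Pi.single j 1, 0, 0) with hadef
    set b : ℝ := f (0, 1, 0) with hbdef
    set γ : Fin k → ℝ := fun i => f (0, 0, Pi.single i 1) with hγdef
    have hdec : ∀ q : (Fin n → ℝ) × ℝ × (Fin k → ℝ),
        f q = (∑ j, a j * q.1 j) + b * q.2.1 + ∑ i, γ i * q.2.2 i :=
      fun q => aux_clm_decomp f q
    have hgen : ∀ i : Fin k, ∀ x ∈ D i,
        (∑ j, a j * x j) + b * ((∑ j, c i j * x j) + d i) + γ i < u0 := by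
      intro i x hx
      have hmem : ((x, g x, fun i' => if i' = i then (1:ℝ) else 0) :
          (Fin n → ℝ) × ℝ × (Fin k → ℝ)) ∈ Cg := by
        rw [hCg]
        exact subset_convexHull ℝ _ (mem_iUnion.2 ⟨i, ⟨x, hx, rfl⟩⟩)
      have h1 := hfS _ hmem
      rw [hdec] at h1
      dsimp only at h1
      rw [hei γ i, hg i x hx] at h1
      exact h1
    have hfp' : u0 < (∑ j, a j * xh j) + b * yh + ∑ i, γ i * zh i := by
      have h1 := hfp
      rw [hdec] at h1
      exact h1
    rcases lt_trichotomy b 0 with hb | hb | hb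
    · -- b < 0 : contradict the lower family
      set α : Fin n → ℝ := fun j => -(a j / b) with hαdef
      have hval : ∀ (i : Fin k) (x : Fin n → ℝ),
          ∑ j, (c i j - α j) * x j = (∑ j, c i j * x j) + (∑ j, a j * x j) / b := by
        intro i x
        have e : ∀ j ∈ Finset.univ, (c i j - α j) * x j
            = c i j * x j + (a j * x j) / b := fun j _ => by
          simp only [hαdef]; ring
        rw [Finset.sum_congr rfl e, Finset.sum_add_distrib, ← Finset.sum_div]
      have hαx : ∀ x : Fin n → ℝ,
          ∑ j, α j * x j = -((∑ j, a j * x j) / b) := by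
        intro x
        have e : ∀ j ∈ Finset.univ, α j * x j = -((a j * x j) / b) := fun j _ => by
          simp only [hαdef]; ring
        rw [Finset.sum_congr rfl e, Finset.sum_neg_distrib, ← Finset.sum_div]
      have hkey : ∀ i, (u0 - γ i) / b - d i ≤
          sInf ((fun x' => ∑ j, (c i j - α j) * x' j) '' D i) := by
        intro i
        apply le_csInf (hImne i α)
        rintro y ⟨x, hx, rfl⟩
        show (u0 - γ i) / b - d i ≤ ∑ j, (c i j - α j) * x j
        rw [hval i x]
        have h1 := hgen i x hx
        have h2 : (u0 - γ i - ∑ j, a j * x j) / b < (∑ j, c i j * x j) + d i := by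
          rw [div_lt_iff_of_neg hb]
          linarith
        have e5 : (u0 - γ i) / b
            = (u0 - γ i - ∑ j, a j * x j) / b + (∑ j, a j * x j) / b := by
          ring
        rw [e5]
        linarith
      have hlow2 : -((∑ j, a j * xh j) / b) + (u0 - ∑ i, γ i * zh i) / b
          ≤ lower α xh zh := by
        rw [hlower, hαx xh]
        have h3 : ∑ i, ((u0 - γ i) / b) * zh i ≤
            ∑ i, (sInf ((fun x' => ∑ j, (c i j - α j) * x' j) '' D i) + d i) * zh i :=
          Finset.sum_le_sum fun i _ =>
            mul_le_mul_of_nonneg_right (by linarith [hkey i]) (hz0 i)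
        have h4 : ∑ i, ((u0 - γ i) / b) * zh i = (u0 - ∑ i, γ i * zh i) / b := by
          have e : ∀ i ∈ Finset.univ, ((u0 - γ i) / b) * zh i
              = (u0 * zh i - γ i * zh i) / b := fun i _ => by ring
          rw [Finset.sum_congr rfl e, ← Finset.sum_div, Finset.sum_sub_distrib,
            ← Finset.mul_sum, hz1, mul_one]
        linarith [h3, h4]
      have h5 : -((∑ j, a j * xh j) / b) + (u0 - ∑ i, γ i * zh i) / b ≤ yh :=
        le_trans hlow2 (hlow α)
      have h6 : (-((∑ j, a j * xh j) / b) + (u0 - ∑ i, γ i * zh i) / b) * b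
          = -(∑ j, a j * xh j) + (u0 - ∑ i, γ i * zh i) := by
        field_simp
        exact mul_div_cancel_left₀ _ hb.ne
      have h7 := mul_le_mul_of_nonpos_right h5 hb.le
      rw [h6] at h7
      linarith [hfp']
    · -- b = 0 : scaling argument
      have hgen0 : ∀ i : Fin k, ∀ x ∈ D i, (∑ j, a j * x j) + γ i < u0 := by
        intro i x hx
        have h1 := hgen i x hx
        rw [hb] at h1
        linarith [h1]
      have hε : 0 < (∑ j, a j * xh j) + (∑ i, γ i * zh i) - u0 := by
        have h1 := hfp'
        rw [hb] at h1
        linarith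
      have hbd0 : ∀ i, BddAbove ((fun x' => ∑ j, c i j * x' j) '' D i) :=
        fun i => ((hDcomp i).image (hcont _)).bddAbove
      have hkey : ∀ t : ℝ, 0 ≤ t →
          yh ≤ (∑ i, (sSup ((fun x' => ∑ j, c i j * x' j) '' D i) + d i) * zh i)
            - t * ((∑ j, a j * xh j) + (∑ i, γ i * zh i) - u0) := by
        intro t ht
        have hαt := hupp (fun j => -(t * a j))
        rw [hupper] at hαt
        have hkey2 : ∀ i,
            sSup ((fun x' => ∑ j, (c i j - -(t * a j)) * x' j) '' D i)
            ≤ sSup ((fun x' => ∑ j, c i j * x' j) '' D i) + t * (u0 - γ i) := by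
          intro i
          apply csSup_le ((hDne i).image _)
          rintro y ⟨x, hx, rfl⟩
          show ∑ j, (c i j - -(t * a j)) * x j ≤ _
          have e1 : ∑ j, (c i j - -(t * a j)) * x j
              = (∑ j, c i j * x j) + t * ∑ j, a j * x j := by
            rw [Finset.mul_sum, ← Finset.sum_add_distrib]
            exact Finset.sum_congr rfl fun j _ => by ring
          rw [e1]
          have h1 : (∑ j, c i j * x j) ≤
              sSup ((fun x' => ∑ j, c i j * x' j) '' D i) :=
            le_csSup (hbd0 i) ⟨x, hx, rfl⟩
          have h2 := hgen0 i x hx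
          nlinarith [mul_le_mul_of_nonneg_left
            (show (∑ j, a j * x j) ≤ u0 - γ i by linarith) ht]
        have e2 : ∑ j, -(t * a j) * xh j = -(t * ∑ j, a j * xh j) := by
          have e : ∀ j ∈ Finset.univ, -(t * a j) * xh j = -(t * (a j * xh j)) :=
            fun j _ => by ring
          rw [Finset.sum_congr rfl e, Finset.sum_neg_distrib, ← Finset.mul_sum]
        have h3 : ∑ i, (sSup ((fun x' => ∑ j, (c i j - -(t * a j)) * x' j) '' D i)
              + d i) * zh i
            ≤ ∑ i, (sSup ((fun x' => ∑ j, c i j * x' j) '' D i)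
              + t * (u0 - γ i) + d i) * zh i :=
          Finset.sum_le_sum fun i _ =>
            mul_le_mul_of_nonneg_right (by linarith [hkey2 i]) (hz0 i)
        have e3 : ∑ i, (sSup ((fun x' => ∑ j, c i j * x' j) '' D i)
              + t * (u0 - γ i) + d i) * zh i
            = (∑ i, (sSup ((fun x' => ∑ j, c i j * x' j) '' D i) + d i) * zh i)
              + t * (u0 - ∑ i, γ i * zh i) := by
          have e : ∀ i ∈ Finset.univ,
              (sSup ((fun x' => ∑ j, c i j * x' j) '' D i) + t * (u0 - γ i) + d i) * zh i
              = (sSup ((fun x' => ∑ j, c i j * x' j) '' D i) + d i) * zh i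
                + t * (u0 * zh i - γ i * zh i) := fun i _ => by ring
          rw [Finset.sum_congr rfl e, Finset.sum_add_distrib, ← Finset.mul_sum,
            Finset.sum_sub_distrib, ← Finset.mul_sum, hz1, mul_one]
        rw [e2] at hαt
        linarith [hαt, h3, e3]
      have h0 := hkey 0 le_rfl
      have hC0 : yh ≤ ∑ i, (sSup ((fun x' => ∑ j, c i j * x' j) '' D i) + d i) * zh i := by
        linarith [h0]
      have ht0 : 0 ≤ ((∑ i, (sSup ((fun x' => ∑ j, c i j * x' j) '' D i) + d i) * zh i)
            - yh + 1) / ((∑ j, a j * xh j) + (∑ i, γ i * zh i) - u0) :=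
        div_nonneg (by linarith) hε.le
      have hfin := hkey _ ht0
      rw [div_mul_cancel₀ _ (ne_of_gt hε)] at hfin
      linarith
    · -- b > 0 : contradict the upper family
      set α : Fin n → ℝ := fun j => -(a j / b) with hαdef
      have hval : ∀ (i : Fin k) (x : Fin n → ℝ),
          ∑ j, (c i j - α j) * x j = (∑ j, c i j * x j) + (∑ j, a j * x j) / b := by
        intro i x
        have e : ∀ j ∈ Finset.univ, (c i j - α j) * x j
            = c i j * x j + (a j * x j) / b := fun j _ => by
          simp only [hαdef]; ring
        rw [Finset.sum_congr rfl e, Finset.sum_add_distrib, ← Finset.sum_div]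
      have hαx : ∀ x : Fin n → ℝ,
          ∑ j, α j * x j = -((∑ j, a j * x j) / b) := by
        intro x
        have e : ∀ j ∈ Finset.univ, α j * x j = -((a j * x j) / b) := fun j _ => by
          simp only [hαdef]; ring
        rw [Finset.sum_congr rfl e, Finset.sum_neg_distrib, ← Finset.sum_div]
      have hkey : ∀ i, sSup ((fun x' => ∑ j, (c i j - α j) * x' j) '' D i)
          ≤ (u0 - γ i) / b - d i := by
        intro i
        apply csSup_le (hImne i α)
        rintro y ⟨x, hx, rfl⟩
        show ∑ j, (c i j - α j) * x j ≤ (u0 - γ i) / b - d i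
        rw [hval i x]
        have h1 := hgen i x hx
        have h2 : (∑ j, c i j * x j) + d i < (u0 - γ i - ∑ j, a j * x j) / b := by
          rw [lt_div_iff₀ hb]
          linarith
        have e5 : (u0 - γ i) / b
            = (u0 - γ i - ∑ j, a j * x j) / b + (∑ j, a j * x j) / b := by
          ring
        rw [e5]
        linarith
      have hup2 : upper α xh zh ≤ -((∑ j, a j * xh j) / b)
          + (u0 - ∑ i, γ i * zh i) / b := by
        rw [hupper, hαx xh]
        have h3 : ∑ i, (sSup ((fun x' => ∑ j, (c i j - α j) * x' j) '' D i) + d i) * zh i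
            ≤ ∑ i, ((u0 - γ i) / b) * zh i :=
          Finset.sum_le_sum fun i _ =>
            mul_le_mul_of_nonneg_right (by linarith [hkey i]) (hz0 i)
        have h4 : ∑ i, ((u0 - γ i) / b) * zh i = (u0 - ∑ i, γ i * zh i) / b := by
          have e : ∀ i ∈ Finset.univ, ((u0 - γ i) / b) * zh i
              = (u0 * zh i - γ i * zh i) / b := fun i _ => by ring
          rw [Finset.sum_congr rfl e, ← Finset.sum_div, Finset.sum_sub_distrib,
            ← Finset.mul_sum, hz1, mul_one]
        linarith [h3, h4]
      have h5 : yh ≤ -((∑ j, a j * xh j) / b) + (u0 - ∑ i, γ i * zh i) / b :=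
        le_trans (hupp α) hup2
      have h6 : (-((∑ j, a j * xh j) / b) + (u0 - ∑ i, γ i * zh i) / b) * b
          = -(∑ j, a j * xh j) + (u0 - ∑ i, γ i * zh i) := by
        field_simp
      have h7 := mul_le_mul_of_nonneg_right h5 hb.le
      rw [h6] at h7
      linarith [hfp']
  · intro hp
    exact ⟨fun α => hvalidU α _ hp, fun α => hvalidL α _ hp⟩
end

section
/- Let S¹,…,S^k ⊆ ℝ^n be defined by S^i = {x : L ≤ x ≤ U, h_{i−1} ≤ w·x ≤ h_i} with h₀ = min_{L≤x≤U} w·x and h_k = max_{L≤x≤U} w·x and h₀ < h₁ < ⋯ < h_k. Let c ∈ ℝ^n, let x* be an optimal solution of max{c·x : L ≤ x ≤ U}, and let i* be an index with x* ∈ S^{i*}. Then for every i > i*, every optimal solution x̂^i of max{c·x : x ∈ S^i} satisfies w·x̂^i = h_{i−1}, and for every i < i*, every optimal solution satisfies w·x̂^i = h_i, provided c is not identically a scalar multiple of w restricted to the free coordinates (i.e., the box-unconstrained optimum over S^i is not attained in the interior of the slab). -/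
open Set

private lemma key13 (n : ℕ) (L U w c : Fin n → ℝ) (lo hi : ℝ) (hlt : lo < hi)
    (x z : Fin n → ℝ) (hx : x ∈ Set.Icc L U) (hz : z ∈ Set.Icc L U)
    (ha : ∑ j, w j * z j ≤ lo) (hb : ∑ j, w j * x j = hi)
    (hc : ∑ j, c j * x j ≤ ∑ j, c j * z j) :
    ∃ y ∈ Set.Icc L U, lo < (∑ j, w j * y j) ∧ (∑ j, w j * y j) < hi ∧
      (∑ j, c j * x j) ≤ ∑ j, c j * y j := by
  set a := ∑ j, w j * z j with ha'
  set mid := (lo + hi) / 2 with hmid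
  have hba : 0 < hi - a := by linarith
  set t := (mid - a) / (hi - a) with ht
  have ht0 : 0 ≤ t := by
    apply div_nonneg <;> linarith
  have ht1 : t ≤ 1 := by
    rw [div_le_one hba]; linarith
  refine ⟨fun j => z j + t * (x j - z j), ⟨fun j => ?_, fun j => ?_⟩, ?_, ?_, ?_⟩
  · have := hx.1 j; have := hz.1 j
    simp only [Pi.le_def] at *
    nlinarith [hx.1 j, hz.1 j]
  · simp only [Pi.le_def] at *
    nlinarith [hx.2 j, hz.2 j]
  all_goals
    have hws : ∀ v : Fin n → ℝ, (∑ j, v j * (z j + t * (x j - z j))) =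
        (∑ j, v j * z j) + t * ((∑ j, v j * x j) - (∑ j, v j * z j)) := by
      intro v
      rw [mul_sub, Finset.mul_sum, Finset.mul_sum, ← Finset.sum_sub_distrib,
        ← Finset.sum_add_distrib]
      apply Finset.sum_congr rfl
      intro j _
      ring
  · rw [hws w, hb]
    have : a + t * (hi - a) = mid := by
      rw [ht]; field_simp; ring
    rw [this]; linarith
  · rw [hws w, hb]
    have : a + t * (hi - a) = mid := by
      rw [ht]; field_simp; ring
    rw [this]; linarith
  · rw [hws c]
    nlinarith

/-- optimizing c·x over the slabs S^i of a box: for slabs above the slab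
containing the box optimum, every slab optimum is active at the lower hyperplane, and
symmetrically below, provided the slab optimum is never attained in the slab interior. -/
theorem stmt13 (n k : ℕ) (L U w c : Fin n → ℝ) (hLU : L ≤ U)
    (h : Fin (k + 1) → ℝ) (hmono : StrictMono h)
    (h0 : IsLeast ((fun x => ∑ j, w j * x j) '' Set.Icc L U) (h 0))
    (hk : IsGreatest ((fun x => ∑ j, w j * x j) '' Set.Icc L U) (h (Fin.last k)))
    (S : Fin k → Set (Fin n → ℝ))
    (hS : ∀ i, S i = {x | x ∈ Set.Icc L U ∧
      h i.castSucc ≤ ∑ j, w j * x j ∧ (∑ j, w j * x j) ≤ h i.succ})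
    (xstar : Fin n → ℝ) (hxstar : xstar ∈ Set.Icc L U)
    (hopt : ∀ y ∈ Set.Icc L U, (∑ j, c j * y j) ≤ ∑ j, c j * xstar j)
    (istar : Fin k) (histar : xstar ∈ S istar)
    -- proviso: over each slab, no optimum is attained in the open interior of the slab
    (hnointerior : ∀ i : Fin k, ∀ x ∈ S i, (∀ y ∈ S i, (∑ j, c j * y j) ≤ ∑ j, c j * x j) →
      ¬(h i.castSucc < (∑ j, w j * x j) ∧ (∑ j, w j * x j) < h i.succ)) :
    (∀ i : Fin k, istar < i → ∀ x ∈ S i,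
      (∀ y ∈ S i, (∑ j, c j * y j) ≤ ∑ j, c j * x j) →
        (∑ j, w j * x j) = h i.castSucc) ∧
    (∀ i : Fin k, i < istar → ∀ x ∈ S i,
      (∀ y ∈ S i, (∑ j, c j * y j) ≤ ∑ j, c j * x j) →
        (∑ j, w j * x j) = h i.succ) := by
  rw [hS istar] at histar
  constructor
  · intro i hi x hx hxopt
    have hni := hnointerior i x hx hxopt
    rw [hS i] at hx
    obtain ⟨hxbox, hxlo, hxhi⟩ := hx
    have hlt : h i.castSucc < h i.succ := hmono Fin.castSucc_lt_succ
    by_contra hne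
    have hxlo' : h i.castSucc < ∑ j, w j * x j := lt_of_le_of_ne hxlo (Ne.symm hne)
    have hxhi' : (∑ j, w j * x j) = h i.succ := by
      by_contra hne2
      exact hni ⟨hxlo', lt_of_le_of_ne hxhi hne2⟩
    -- xstar below: w·xstar ≤ h istar.succ ≤ h i.castSucc
    have hle : (istar.succ : Fin (k+1)) ≤ i.castSucc := by
      simp only [Fin.le_def, Fin.val_succ, Fin.coe_castSucc]
      exact hi
    have ha : (∑ j, w j * xstar j) ≤ h i.castSucc :=
      le_trans histar.2.2 (hmono.monotone hle)
    obtain ⟨y, hybox, hylo, hyhi, hyc⟩ := key13 n L U w c (h i.castSucc) (h i.succ) hlt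
      x xstar hxbox hxstar ha hxhi' (hopt x hxbox)
    have hyS : y ∈ S i := by
      rw [hS i]; exact ⟨hybox, le_of_lt hylo, le_of_lt hyhi⟩
    have hyopt : ∀ z ∈ S i, (∑ j, c j * z j) ≤ ∑ j, c j * y j :=
      fun z hz => le_trans (hxopt z hz) hyc
    exact hnointerior i y hyS hyopt ⟨hylo, hyhi⟩
  · intro i hi x hx hxopt
    have hni := hnointerior i x hx hxopt
    rw [hS i] at hx
    obtain ⟨hxbox, hxlo, hxhi⟩ := hx
    have hlt : h i.castSucc < h i.succ := hmono Fin.castSucc_lt_succ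
    by_contra hne
    have hxhi' : (∑ j, w j * x j) < h i.succ := lt_of_le_of_ne hxhi hne
    have hxlo' : (∑ j, w j * x j) = h i.castSucc := by
      by_contra hne2
      exact hni ⟨lt_of_le_of_ne hxlo (Ne.symm hne2), hxhi'⟩
    -- xstar above: h i.succ ≤ h istar.castSucc ≤ w·xstar
    have hle : (i.succ : Fin (k+1)) ≤ istar.castSucc := by
      simp only [Fin.le_def, Fin.val_succ, Fin.coe_castSucc]
      exact hi
    have ha : h i.succ ≤ ∑ j, w j * xstar j :=
      le_trans (hmono.monotone hle) histar.2.1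
    -- apply key13 with negated w
    have hb' : (∑ j, (-w) j * x j) = -(h i.castSucc) := by
      simp only [Pi.neg_apply, neg_mul]
      rw [Finset.sum_neg_distrib, hxlo']
    have ha' : (∑ j, (-w) j * xstar j) ≤ -(h i.succ) := by
      simp only [Pi.neg_apply, neg_mul]
      rw [Finset.sum_neg_distrib]
      linarith
    obtain ⟨y, hybox, hylo, hyhi, hyc⟩ := key13 n L U (-w) c (-(h i.succ)) (-(h i.castSucc))
      (by linarith) x xstar hxbox hxstar ha' hb' (hopt x hxbox)
    simp only [Pi.neg_apply, neg_mul, Finset.sum_neg_distrib] at hylo hyhi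
    have hyS : y ∈ S i := by
      rw [hS i]; exact ⟨hybox, by linarith, by linarith⟩
    have hyopt : ∀ z ∈ S i, (∑ j, c j * z j) ≤ ∑ j, c j * y j :=
      fun z hz => le_trans (hxopt z hz) hyc
    exact hnointerior i y hyS hyopt ⟨by linarith, by linarith⟩
end
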